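/- arXiv:1304.7206 — 7 statements merged into one kernel-verified Lean document; each statement's English description precedes it below -/
import Mathlib

section
/- For every b > 0, ∫_{ℝ²} e^{-b‖x‖}(b sin ‖x‖ + cos ‖x‖) dx = 2π (3b² − 1)/(1 + b²)². In particular, for 0 < b < 1/√3 this integral is strictly negative, i.e. the value at k = 0 of the Fourier transform of the connectivity kernel is negative, so the kernel is globally inhibitory (this covers the paper's choice b = 0.4). -/
open MeasureTheory Real Set Filter

lemma radial_int (b : ℝ) (hb : 0 < b) :
    ∫ y in Ioi (0:ℝ), y * (Real.exp (-b * y) * (b * Real.sin y + Real.cos y))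
      = (3 * b ^ 2 - 1) / (1 + b ^ 2) ^ 2 := by
  have hD : (1 + b ^ 2) ≠ 0 := by positivity
  set p1 : ℝ := -2*b*(1+b^2) with hp1
  set p0 : ℝ := 1 - 3*b^2 with hp0
  set q1 : ℝ := (1-b^2)*(1+b^2) with hq1
  set q0 : ℝ := b*(3-b^2) with hq0
  set F : ℝ → ℝ := fun y => Real.exp (-b*y) *
    ((p1*y+p0) * Real.cos y + (q1*y+q0) * Real.sin y) / (1+b^2)^2 with hF
  have hderiv : ∀ y ∈ Ici (0:ℝ), HasDerivAt F
      (y * (Real.exp (-b * y) * (b * Real.sin y + Real.cos y))) y := by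
    intro y _
    have he : HasDerivAt (fun y : ℝ => Real.exp (-b*y)) (Real.exp (-b*y) * (-b)) y := by
      simpa using ((hasDerivAt_id y).const_mul (-b)).exp
    have hP : HasDerivAt (fun y : ℝ => p1*y+p0) p1 y := by
      simpa using ((hasDerivAt_id y).const_mul p1).add_const p0
    have hQ : HasDerivAt (fun y : ℝ => q1*y+q0) q1 y := by
      simpa using ((hasDerivAt_id y).const_mul q1).add_const q0
    have h1 := (hP.mul (Real.hasDerivAt_cos y)).add (hQ.mul (Real.hasDerivAt_sin y))
    have h2 := (he.mul h1).div_const ((1+b^2)^2)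
    refine HasDerivAt.congr_deriv h2 ?_
    simp only [Pi.mul_apply, Pi.add_apply, hp1, hp0, hq1, hq0]
    field_simp
    ring
  have hint : IntegrableOn
      (fun y => y * (Real.exp (-b * y) * (b * Real.sin y + Real.cos y))) (Ioi (0:ℝ)) := by
    have h0 : IntegrableOn (fun x : ℝ => x ^ (1:ℝ) * Real.exp (-b * x ^ (1:ℝ))) (Ioi 0) :=
      integrableOn_rpow_mul_exp_neg_mul_rpow (by norm_num) zero_lt_one hb
    have h1 : IntegrableOn (fun x : ℝ => (b+1) * (x * Real.exp (-b * x))) (Ioi 0) := by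
      refine ((h0.congr_fun (fun x hx => ?_) measurableSet_Ioi).const_mul (b+1))
      rw [Real.rpow_one]
    refine Integrable.mono h1 ?_ ?_
    · apply Measurable.aestronglyMeasurable
      fun_prop
    · filter_upwards [ae_restrict_mem measurableSet_Ioi] with x hx
      have hx0 : (0:ℝ) ≤ x := (le_of_lt hx)
      have hb1 : |b * Real.sin x + Real.cos x| ≤ b + 1 := by
        calc |b * Real.sin x + Real.cos x| ≤ |b * Real.sin x| + |Real.cos x| := abs_add_le _ _
        _ ≤ b * 1 + 1 := by
            gcongr
            · rw [abs_mul, abs_of_pos hb]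
              gcongr
              exact Real.abs_sin_le_one x
            · exact Real.abs_cos_le_one x
        _ = b + 1 := by ring
      have he : (0:ℝ) < Real.exp (-b*x) := Real.exp_pos _
      rw [Real.norm_eq_abs, Real.norm_eq_abs, abs_mul, abs_mul, abs_of_nonneg hx0,
        abs_of_pos he]
      rw [abs_of_nonneg (by positivity : (0:ℝ) ≤ (b+1) * (x * Real.exp (-b*x)))]
      calc x * (Real.exp (-b*x) * |b * Real.sin x + Real.cos x|)
          ≤ x * (Real.exp (-b*x) * (b+1)) := by gcongr
        _ = (b+1) * (x * Real.exp (-b*x)) := by ring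
  have hlim : Tendsto F atTop (nhds 0) := by
    have hx1 : Tendsto (fun x : ℝ => x ^ (1:ℝ) * Real.exp (-b * x)) atTop (nhds 0) :=
      tendsto_rpow_mul_exp_neg_mul_atTop_nhds_zero 1 b hb
    have hx1' : Tendsto (fun x : ℝ => x * Real.exp (-b * x)) atTop (nhds 0) := by
      refine hx1.congr' ?_
      filter_upwards [eventually_gt_atTop (0:ℝ)] with x hx
      rw [Real.rpow_one]
    have hx0 : Tendsto (fun x : ℝ => Real.exp (-b * x)) atTop (nhds 0) := by
      have : Tendsto (fun x : ℝ => -b * x) atTop atBot :=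
        Tendsto.const_mul_atTop_of_neg (neg_neg_iff_pos.mpr hb) tendsto_id
      exact Real.tendsto_exp_atBot.comp this
    have hbound : ∀ᶠ y in atTop, ‖F y‖ ≤
        ((|p1| + |q1|) * (y * Real.exp (-b*y)) + (|p0| + |q0|) * Real.exp (-b*y)) / (1+b^2)^2 := by
      filter_upwards [eventually_ge_atTop (0:ℝ)] with y hy
      have key : |(p1*y+p0) * Real.cos y + (q1*y+q0) * Real.sin y|
          ≤ (|p1| + |q1|) * y + (|p0| + |q0|) := by
        calc |(p1*y+p0) * Real.cos y + (q1*y+q0) * Real.sin y|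
            ≤ |(p1*y+p0) * Real.cos y| + |(q1*y+q0) * Real.sin y| := abs_add_le _ _
          _ ≤ |p1*y+p0| * 1 + |q1*y+q0| * 1 := by
              rw [abs_mul, abs_mul]
              gcongr
              exacts [Real.abs_cos_le_one y, Real.abs_sin_le_one y]
          _ ≤ (|p1| * y + |p0|) + (|q1| * y + |q0|) := by
              rw [mul_one, mul_one]
              gcongr <;>
              · refine (abs_add_le _ _).trans ?_
                gcongr
                rw [abs_mul, abs_of_nonneg hy]
          _ = (|p1| + |q1|) * y + (|p0| + |q0|) := by ring
      rw [hF]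
      simp only [Real.norm_eq_abs, abs_div, abs_mul]
      rw [abs_of_pos (Real.exp_pos _), abs_of_nonneg (by positivity : (0:ℝ) ≤ (1+b^2)^2)]
      rw [div_le_div_iff_of_pos_right (by positivity)]
      calc Real.exp (-b*y) * |(p1*y+p0) * Real.cos y + (q1*y+q0) * Real.sin y|
          ≤ Real.exp (-b*y) * ((|p1| + |q1|) * y + (|p0| + |q0|)) := by gcongr
        _ = (|p1| + |q1|) * (y * Real.exp (-b*y)) + (|p0| + |q0|) * Real.exp (-b*y) := by ring
    have hg : Tendsto (fun y : ℝ =>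
        ((|p1|+|q1|) * (y * Real.exp (-b*y)) + (|p0|+|q0|) * Real.exp (-b*y)) / (1+b^2)^2)
        atTop (nhds 0) := by
      have := ((hx1'.const_mul (|p1|+|q1|)).add (hx0.const_mul (|p0|+|q0|))).div_const ((1+b^2)^2)
      simpa using this
    exact squeeze_zero_norm' hbound hg
  have := integral_Ioi_of_hasDerivAt_of_tendsto' hderiv hint hlim
  rw [this, hF]
  simp only [mul_zero, Real.exp_zero, Real.cos_zero, Real.sin_zero]
  rw [hp0]
  field_simp
  ring


/-- For every `b > 0`,
`∫_{ℝ²} e^{-b‖x‖}(b sin ‖x‖ + cos ‖x‖) dx = 2π (3b² − 1)/(1 + b²)²`; in particular for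
`0 < b < 1/√3` the integral (the Fourier transform of the kernel at `k = 0`) is strictly
negative, so the kernel is globally inhibitory. -/
theorem stmt2 (b : ℝ) (hb : 0 < b)
    (W : EuclideanSpace ℝ (Fin 2) → ℝ)
    (hW : ∀ x, W x = Real.exp (-b * ‖x‖) * (b * Real.sin ‖x‖ + Real.cos ‖x‖)) :
    (∫ x, W x) = 2 * Real.pi * (3 * b ^ 2 - 1) / (1 + b ^ 2) ^ 2 ∧
    (b < 1 / Real.sqrt 3 → (∫ x, W x) < 0) := by
  have key : (∫ x, W x) = 2 * Real.pi * (3 * b ^ 2 - 1) / (1 + b ^ 2) ^ 2 := by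
    have h := integral_fun_norm_addHaar (volume : Measure (EuclideanSpace ℝ (Fin 2)))
      (fun r => Real.exp (-b*r) * (b * Real.sin r + Real.cos r))
    simp only [hW]
    rw [h]
    have hdim : Module.finrank ℝ (EuclideanSpace ℝ (Fin 2)) = 2 := finrank_euclideanSpace_fin
    rw [hdim]
    have hvol : (volume (Metric.ball (0 : EuclideanSpace ℝ (Fin 2)) 1)).toReal = Real.pi := by
      rw [EuclideanSpace.volume_ball]
      simp only [Fintype.card_fin]
      norm_num
      exact Real.sq_sqrt Real.pi_nonneg
    rw [measureReal_def, hvol]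
    have : ∫ y in Set.Ioi (0:ℝ), y ^ (2-1) • (Real.exp (-b*y) * (b * Real.sin y + Real.cos y))
        = (3 * b ^ 2 - 1) / (1 + b ^ 2) ^ 2 := by
      rw [← radial_int b hb]
      refine setIntegral_congr_fun measurableSet_Ioi fun y _ => ?_
      simp [smul_eq_mul]
    rw [this]
    rw [nsmul_eq_mul, smul_eq_mul]
    ring
  refine ⟨key, fun hlt => ?_⟩
  rw [key]
  have h3 : b ^ 2 < 1 / 3 := by
    have h2 : b < 1 / Real.sqrt 3 := hlt
    have hs : (0:ℝ) < Real.sqrt 3 := Real.sqrt_pos.mpr (by norm_num)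
    have := sq_lt_sq' (by linarith [one_div_pos.mpr hs] : -(1 / Real.sqrt 3) < b) h2
    calc b ^ 2 < (1 / Real.sqrt 3) ^ 2 := this
      _ = 1 / 3 := by
        rw [div_pow, one_pow, Real.sq_sqrt (by norm_num : (3:ℝ) ≥ 0)]
  apply div_neg_of_neg_of_pos
  · have : 3 * b ^ 2 - 1 < 0 := by linarith
    nlinarith [Real.pi_pos]
  · positivity
end

section
/- Let W : ℝ² → ℝ be integrable, let μ, θ > 0 and let S be the firing-rate function. Then for every p ∈ [1, ∞] and all measurable u, v : ℝ² → ℝ, the L^p-norm estimate ‖W ⋆ (S∘u) − W ⋆ (S∘v)‖_{L^p} ≤ (μ/4) ‖W‖_{L¹} ‖u − v‖_{L^p} holds (with the convention that the right-hand side is ∞ when ‖u−v‖_{L^p} = ∞). In particular the nonlinear operator u ↦ W ⋆ (S∘u) is globally Lipschitz on L^p(ℝ²) with constant (μ/4)‖W‖_{L¹}. -/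
open MeasureTheory Real
open scoped ENNReal

noncomputable section

namespace Stmt5Aux

abbrev E2 := EuclideanSpace ℝ (Fin 2)

lemma lint_sub_left (F : E2 → ℝ≥0∞) (x : E2) : ∫⁻ y, F (x - y) = ∫⁻ y, F y :=
  (Measure.measurePreserving_sub_left volume x).lintegral_comp_emb
    (MeasurableEquiv.subLeft x).measurableEmbedding F

lemma lint_sub_right (F : E2 → ℝ≥0∞) (y : E2) : ∫⁻ x, F (x - y) = ∫⁻ x, F x :=
  lintegral_sub_right_eq_self F y

/-- Young's inequality for convolution with an `L¹` kernel, exponents `(1, p, p)`. -/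
lemma young {f g : E2 → ℝ} (hf : Measurable f) (hg : Measurable g) {p : ℝ≥0∞} (hp : 1 ≤ p) :
    eLpNorm (fun x => ∫ y, f (x - y) * g y) p volume ≤
      eLpNorm f 1 volume * eLpNorm g p volume := by
  set nf : E2 → ℝ≥0∞ := fun x => (‖f x‖₊ : ℝ≥0∞) with hnf
  set ng : E2 → ℝ≥0∞ := fun x => (‖g x‖₊ : ℝ≥0∞) with hng
  have hnfm : Measurable nf := hf.enorm
  have hngm : Measurable ng := hg.enorm
  set A : ℝ≥0∞ := ∫⁻ x, nf x with hA
  have hAf : eLpNorm f 1 volume = A := eLpNorm_one_eq_lintegral_enorm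
  have hmx : ∀ x : E2, Measurable fun y => nf (x - y) :=
    fun x => hnfm.comp (measurable_const.sub measurable_id)
  have key : ∀ x : E2, (‖∫ y, f (x - y) * g y‖₊ : ℝ≥0∞) ≤ ∫⁻ y, nf (x - y) * ng y := by
    intro x
    refine (enorm_integral_le_lintegral_enorm _).trans ?_
    simp [nf, ng, nnnorm_mul, ENNReal.coe_mul]
    exact le_rfl
  have swapped : ∀ h : E2 → ℝ≥0∞, Measurable h →
      (∫⁻ x, ∫⁻ y, nf (x - y) * h y) = A * ∫⁻ y, h y := by
    intro h hh
    rw [lintegral_lintegral_swap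
      (((hnfm.comp (measurable_fst.sub measurable_snd)).mul
        (hh.comp measurable_snd)).aemeasurable)]
    calc (∫⁻ y, ∫⁻ x, nf (x - y) * h y)
        = ∫⁻ y, (∫⁻ x, nf (x - y)) * h y := by
          refine lintegral_congr fun y => ?_
          exact lintegral_mul_const (h y) (hnfm.comp (measurable_id.sub measurable_const))
      _ = ∫⁻ y, A * h y := by simp_rw [lint_sub_right nf]; rfl
      _ = A * ∫⁻ y, h y := lintegral_const_mul A hh
  rw [hAf]
  rcases eq_or_ne p ∞ with rfl | hptop
  · -- p = ∞
    rw [eLpNorm_exponent_top, eLpNorm_exponent_top]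
    set C : ℝ≥0∞ := eLpNormEssSup g volume with hC
    have hgC : ∀ᵐ y : E2, ng y ≤ C := ENNReal.ae_le_essSup ng
    refine essSup_le_of_ae_le _ (Filter.Eventually.of_forall fun x => ?_)
    refine (key x).trans ?_
    calc ∫⁻ y, nf (x - y) * ng y ≤ ∫⁻ y, nf (x - y) * C := by
          refine lintegral_mono_ae (hgC.mono fun y hy => ?_)
          exact mul_le_mul_right hy _
      _ = (∫⁻ y, nf (x - y)) * C := lintegral_mul_const C (hmx x)
      _ = A * C := by rw [lint_sub_left]
  rcases eq_or_ne p 1 with rfl | hp1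
  · -- p = 1
    rw [eLpNorm_one_eq_lintegral_enorm, eLpNorm_one_eq_lintegral_enorm]
    calc (∫⁻ x, (‖∫ y, f (x - y) * g y‖₊ : ℝ≥0∞))
        ≤ ∫⁻ x, ∫⁻ y, nf (x - y) * ng y := lintegral_mono key
      _ = A * ∫⁻ y, ng y := swapped ng hngm
  · -- 1 < p < ∞
    have hp0 : p ≠ 0 := by positivity
    rw [eLpNorm_eq_lintegral_rpow_enorm_toReal hp0 hptop, eLpNorm_eq_lintegral_rpow_enorm_toReal hp0 hptop]
    set r : ℝ := p.toReal with hr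
    have hplt : 1 < p := hp.lt_of_ne (Ne.symm hp1)
    have hr1 : 1 < r := by
      have := (ENNReal.toReal_lt_toReal ENNReal.one_ne_top hptop).mpr hplt
      simpa using this
    have hr0 : (0:ℝ) < r := lt_trans one_pos hr1
    set q : ℝ := Real.conjExponent r with hq
    have hrq : r.HolderConjugate q := Real.HolderConjugate.conjExponent hr1
    have hq0 : (0:ℝ) < q := hrq.symm.pos
    have hconj : 1/q + 1/r = 1 := by
      have := hrq.inv_add_inv_eq_one
      rw [one_div, one_div]
      linarith
    set B : ℝ≥0∞ := ∫⁻ y, ng y ^ r with hB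
    -- pointwise Hölder bound
    have pointwise : ∀ x : E2, (∫⁻ y, nf (x - y) * ng y) ^ r ≤
        A ^ ((1/q) * r) * ∫⁻ y, nf (x - y) * ng y ^ r := by
      intro x
      have holder := ENNReal.lintegral_mul_le_Lp_mul_Lq volume hrq.symm
        (((hmx x).pow_const (1/q)).aemeasurable)
        ((((hmx x).pow_const (1/r)).mul hngm).aemeasurable)
        (f := fun y => nf (x - y) ^ (1/q))
        (g := fun y => nf (x - y) ^ (1/r) * ng y)
      have split : ∀ y : E2, nf (x - y) * ng y =
          (fun y => nf (x - y) ^ (1/q)) y * (fun y => nf (x - y) ^ (1/r) * ng y) y := by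
        intro y
        simp only
        rw [← mul_assoc, ← ENNReal.rpow_add_of_nonneg _ _ (by positivity) (by positivity),
          hconj, ENNReal.rpow_one]
      have e1 : (∫⁻ y, ((fun y => nf (x - y) ^ (1/q)) y) ^ q) = A := by
        have : ∀ y : E2, (nf (x - y) ^ (1/q)) ^ q = nf (x - y) := by
          intro y
          rw [← ENNReal.rpow_mul, one_div, inv_mul_cancel₀ (ne_of_gt hq0), ENNReal.rpow_one]
        simp_rw [this]
        exact lint_sub_left nf x
      have e2 : (∫⁻ y, ((fun y => nf (x - y) ^ (1/r) * ng y) y) ^ r) =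
          ∫⁻ y, nf (x - y) * ng y ^ r := by
        refine lintegral_congr fun y => ?_
        simp only
        rw [ENNReal.mul_rpow_of_nonneg _ _ (le_of_lt hr0), ← ENNReal.rpow_mul,
          one_div, inv_mul_cancel₀ (ne_of_gt hr0), ENNReal.rpow_one]
      calc (∫⁻ y, nf (x - y) * ng y) ^ r
          = (∫⁻ y, (fun y => nf (x - y) ^ (1/q)) y * (fun y => nf (x - y) ^ (1/r) * ng y) y) ^ r := by
            simp_rw [← split]
        _ ≤ ((∫⁻ y, ((fun y => nf (x - y) ^ (1/q)) y) ^ q) ^ (1/q) *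
              (∫⁻ y, ((fun y => nf (x - y) ^ (1/r) * ng y) y) ^ r) ^ (1/r)) ^ r := by
            refine ENNReal.rpow_le_rpow ?_ (le_of_lt hr0)
            exact holder
        _ = A ^ ((1/q) * r) * ∫⁻ y, nf (x - y) * ng y ^ r := by
            rw [e1, e2, ENNReal.mul_rpow_of_nonneg _ _ (le_of_lt hr0), ← ENNReal.rpow_mul,
              ← ENNReal.rpow_mul, one_div (r:ℝ), inv_mul_cancel₀ (ne_of_gt hr0),
              ENNReal.rpow_one]
    calc (∫⁻ x, (‖∫ y, f (x - y) * g y‖₊ : ℝ≥0∞) ^ r) ^ (1/r)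
        ≤ (∫⁻ x, A ^ ((1/q) * r) * ∫⁻ y, nf (x - y) * ng y ^ r) ^ (1/r) := by
          refine ENNReal.rpow_le_rpow (lintegral_mono fun x => ?_) (by positivity)
          exact le_trans (ENNReal.rpow_le_rpow (key x) (le_of_lt hr0)) (pointwise x)
      _ = (A ^ ((1/q) * r) * (A * B)) ^ (1/r) := by
          rw [lintegral_const_mul _ ?_, swapped _ (hngm.pow_const r)]
          exact Measurable.lintegral_prod_right
            ((hnfm.comp (measurable_fst.sub measurable_snd)).mul
              ((hngm.pow_const r).comp measurable_snd))
      _ = A * B ^ (1/r) := by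
          rw [ENNReal.mul_rpow_of_nonneg _ _ (by positivity),
            ENNReal.mul_rpow_of_nonneg _ _ (by positivity), ← ENNReal.rpow_mul]
          have : (1/q) * r * (1/r) = 1/q := by field_simp
          rw [this, ← mul_assoc, ← ENNReal.rpow_add_of_nonneg _ _ (by positivity) (by positivity),
            hconj, ENNReal.rpow_one]

/-- The firing-rate function is `(μ/4)`-Lipschitz. -/
lemma S_lip {μ θ : ℝ} (hμ : 0 < μ) {S : ℝ → ℝ}
    (hS : ∀ u, S u = 1 / (1 + Real.exp (-μ * u + θ)) - 1 / (1 + Real.exp θ)) :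
    ∀ a b : ℝ, |S a - S b| ≤ μ / 4 * |a - b| := by
  have hSeq : S = fun u => (1 + Real.exp (-μ * u + θ))⁻¹ - (1 + Real.exp θ)⁻¹ := by
    funext u; rw [hS u, one_div, one_div]
  have hderiv : ∀ t : ℝ, HasDerivAt S
      (μ * Real.exp (-μ * t + θ) / (1 + Real.exp (-μ * t + θ)) ^ 2) t := by
    intro t
    rw [hSeq]
    have h1 : HasDerivAt (fun u : ℝ => -μ * u + θ) (-μ) t := by
      simpa using ((hasDerivAt_id t).const_mul (-μ)).add_const θ
    have h2 := h1.exp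
    have h3 : HasDerivAt (fun u : ℝ => 1 + Real.exp (-μ * u + θ))
        (Real.exp (-μ * t + θ) * -μ) t := h2.const_add 1
    have h4 := h3.inv (by positivity)
    have := h4.sub_const (1 + Real.exp θ)⁻¹
    exact this.congr_deriv (by ring)
  have hdiff : Differentiable ℝ S := fun t => (hderiv t).differentiableAt
  have hbound : ∀ t : ℝ, ‖deriv S t‖₊ ≤ Real.toNNReal (μ / 4) := by
    intro t
    rw [(hderiv t).deriv, ← NNReal.coe_le_coe, coe_nnnorm,
      Real.coe_toNNReal _ (by positivity), Real.norm_eq_abs]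
    set e := Real.exp (-μ * t + θ) with he
    have he0 : 0 < e := Real.exp_pos _
    rw [abs_of_nonneg (by positivity), div_le_iff₀ (by positivity)]
    nlinarith [sq_nonneg (1 - e)]
  have hlip : LipschitzWith (Real.toNNReal (μ / 4)) S :=
    lipschitzWith_of_nnnorm_deriv_le hdiff hbound
  intro a b
  have := hlip.dist_le_mul a b
  rwa [Real.dist_eq, Real.dist_eq, Real.coe_toNNReal _ (by positivity)] at this

end Stmt5Aux

end

open Stmt5Aux in
/-- For integrable `W : ℝ² → ℝ` and the firing-rate function `S`
(with `μ, θ > 0`), for every `p ∈ [1, ∞]` and all measurable `u, v : ℝ² → ℝ`,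
`‖W ⋆ (S∘u) − W ⋆ (S∘v)‖_{L^p} ≤ (μ/4) ‖W‖_{L¹} ‖u − v‖_{L^p}` (in `ℝ≥0∞`, so the
convention about infinite right-hand sides is automatic); i.e. `u ↦ W ⋆ (S∘u)` is
globally Lipschitz on `L^p(ℝ²)` with constant `(μ/4)‖W‖_{L¹}`. -/
theorem stmt5 (W : EuclideanSpace ℝ (Fin 2) → ℝ) (hW : Integrable W)
    (μ θ : ℝ) (hμ : 0 < μ) (hθ : 0 < θ)
    (S : ℝ → ℝ)
    (hS : ∀ u, S u = 1 / (1 + Real.exp (-μ * u + θ)) - 1 / (1 + Real.exp θ)) :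
    ∀ p : ℝ≥0∞, 1 ≤ p →
      ∀ u v : EuclideanSpace ℝ (Fin 2) → ℝ, Measurable u → Measurable v →
        eLpNorm (fun x => (∫ y, W (x - y) * S (u y)) - ∫ y, W (x - y) * S (v y)) p volume ≤
          ENNReal.ofReal (μ / 4) * eLpNorm W 1 volume *
            eLpNorm (fun x => u x - v x) p volume := by
  intro p hp u v hu hv
  have hSeq : S = fun t => (1 + Real.exp (-μ * t + θ))⁻¹ - (1 + Real.exp θ)⁻¹ := by
    funext t; rw [hS t, one_div, one_div]
  have hScont : Continuous S := by
    rw [hSeq]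
    have : Continuous fun t : ℝ => 1 + Real.exp (-μ * t + θ) := by continuity
    exact (this.inv₀ fun x => by positivity).sub continuous_const
  have hSbdd : ∀ t : ℝ, |S t| ≤ 1 := by
    intro t
    rw [hSeq]
    have h1 : 0 < 1 + Real.exp (-μ * t + θ) := by positivity
    have h2 : 0 < 1 + Real.exp θ := by positivity
    have e1 : (1 + Real.exp (-μ * t + θ))⁻¹ ≤ 1 := by
      rw [inv_le_one_iff₀]; exact .inr (by linarith [Real.exp_pos (-μ * t + θ)])
    have e2 : (1 + Real.exp θ)⁻¹ ≤ 1 := by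
      rw [inv_le_one_iff₀]; exact .inr (by linarith [Real.exp_pos θ])
    have p1 : 0 < (1 + Real.exp (-μ * t + θ))⁻¹ := by positivity
    have p2 : 0 < (1 + Real.exp θ)⁻¹ := by positivity
    rw [abs_le]
    constructor <;> simp only <;> linarith
  have hlip := S_lip hμ hS
  -- measurable representative of W
  set W' := hW.1.mk W with hW'def
  have hW'm : Measurable W' := hW.1.stronglyMeasurable_mk.measurable
  have hae : W =ᵐ[volume] W' := hW.1.ae_eq_mk
  have hW' : Integrable W' := hW.congr hae
  set g : EuclideanSpace ℝ (Fin 2) → ℝ := fun y => S (u y) - S (v y) with hgdef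
  have hgm : Measurable g := (hScont.measurable.comp hu).sub (hScont.measurable.comp hv)
  have hint : ∀ (w : EuclideanSpace ℝ (Fin 2) → ℝ), Measurable w →
      ∀ x : EuclideanSpace ℝ (Fin 2), Integrable (fun y => W' (x - y) * S (w y)) := by
    intro w hw x
    have h1 : Integrable (fun y => W' (x - y)) :=
      (integrable_comp_sub_left W' x).mpr hW'
    have h2 : Integrable (fun y => S (w y) * W' (x - y)) := by
      refine h1.bdd_mul (c := 1) ?_ (Filter.Eventually.of_forall fun y => ?_)
      · exact (hScont.measurable.comp hw).aestronglyMeasurable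
      · rw [Real.norm_eq_abs]; exact hSbdd _
    simpa [mul_comm] using h2
  -- rewrite the difference of convolutions as a single convolution
  have heq : (fun x => (∫ y, W (x - y) * S (u y)) - ∫ y, W (x - y) * S (v y)) =
      fun x => ∫ y, W' (x - y) * g y := by
    funext x
    have hx : (fun y : EuclideanSpace ℝ (Fin 2) => W (x - y)) =ᵐ[volume]
        fun y => W' (x - y) :=
      (Measure.measurePreserving_sub_left volume x).quasiMeasurePreserving.ae_eq hae
    have c1 : (∫ y, W (x - y) * S (u y)) = ∫ y, W' (x - y) * S (u y) :=
      integral_congr_ae (hx.mul Filter.EventuallyEq.rfl)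
    have c2 : (∫ y, W (x - y) * S (v y)) = ∫ y, W' (x - y) * S (v y) :=
      integral_congr_ae (hx.mul Filter.EventuallyEq.rfl)
    rw [c1, c2, ← integral_sub (hint u hu x) (hint v hv x)]
    simp [g, mul_sub]
  rw [heq]
  calc eLpNorm (fun x => ∫ y, W' (x - y) * g y) p volume
      ≤ eLpNorm W' 1 volume * eLpNorm g p volume := young hW'm hgm hp
    _ ≤ eLpNorm W' 1 volume *
        (ENNReal.ofReal (μ / 4) * eLpNorm (fun x => u x - v x) p volume) := by
        refine mul_le_mul_right ?_ _
        calc eLpNorm g p volume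
            ≤ eLpNorm (fun y => μ / 4 * ‖u y - v y‖) p volume := by
              refine eLpNorm_mono_real fun y => ?_
              rw [Real.norm_eq_abs, Real.norm_eq_abs]
              exact hlip (u y) (v y)
          _ = ENNReal.ofReal (μ / 4) * eLpNorm (fun y => ‖u y - v y‖) p volume := by
              have hsmul : (fun y : EuclideanSpace ℝ (Fin 2) => μ / 4 * ‖u y - v y‖) =
                  (μ / 4) • fun y => ‖u y - v y‖ := rfl
              rw [hsmul, eLpNorm_const_smul]
              congr 1
              exact Real.enorm_eq_ofReal (by positivity)
          _ = ENNReal.ofReal (μ / 4) * eLpNorm (fun x => u x - v x) p volume := by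
              rw [eLpNorm_norm]
    _ = ENNReal.ofReal (μ / 4) * eLpNorm W 1 volume *
        eLpNorm (fun x => u x - v x) p volume := by
        rw [eLpNorm_congr_ae hae.symm]
        ring
end

section
/- Let W : ℝ² → ℝ be integrable, let μ, θ > 0 and let S be the firing-rate function, and let g : ℝ² → ℝ be bounded. If a bounded measurable function u : ℝ² → ℝ is a stationary solution of the neural field equation, i.e. u(x) = ∫_{ℝ²} W(x − y) S(u(y)) dy + g(x) for all x ∈ ℝ², then it obeys the a priori bound sup_x |u(x)| ≤ (e^{θ}/(1 + e^{θ})) ∫_{ℝ²} |W| + sup_x |g(x)|. -/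
open MeasureTheory Real

/-- A priori bound for bounded measurable stationary solutions of the
neural field equation `u(x) = ∫ W(x−y) S(u(y)) dy + g(x)` with integrable `W`, bounded `g`:
`sup_x |u(x)| ≤ (e^θ/(1+e^θ)) ∫ |W| + sup_x |g(x)|`. -/
theorem stmt6 (W : EuclideanSpace ℝ (Fin 2) → ℝ) (hW : Integrable W)
    (μ θ : ℝ) (hμ : 0 < μ) (hθ : 0 < θ)
    (S : ℝ → ℝ)
    (hS : ∀ u, S u = 1 / (1 + Real.exp (-μ * u + θ)) - 1 / (1 + Real.exp θ))
    (g u : EuclideanSpace ℝ (Fin 2) → ℝ)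
    (hg : ∃ C, ∀ x, |g x| ≤ C)
    (hub : ∃ C, ∀ x, |u x| ≤ C) (hum : Measurable u)
    (heq : ∀ x, u x = (∫ y, W (x - y) * S (u y)) + g x) :
    (⨆ x, |u x|) ≤ Real.exp θ / (1 + Real.exp θ) * (∫ y, |W y|) + ⨆ x, |g x| := by
  obtain ⟨Cg, hCg⟩ := hg
  set c := Real.exp θ / (1 + Real.exp θ) with hc
  have h2 : (0:ℝ) < 1 + Real.exp θ := by positivity
  have hc0 : 0 ≤ c := by positivity
  have hSb : ∀ v, |S v| ≤ c := by
    intro v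
    rw [hS]
    have h1 : (0:ℝ) < 1 + Real.exp (-μ * v + θ) := by positivity
    have e3 : (1:ℝ) ≤ Real.exp θ := Real.one_le_exp hθ.le
    have u1 : 1 / (1 + Real.exp (-μ * v + θ)) ≤ 1 := by
      rw [div_le_one h1]; nlinarith [Real.exp_pos (-μ * v + θ)]
    have u0 : 0 ≤ 1 / (1 + Real.exp (-μ * v + θ)) := by positivity
    have l1 : 1 / (1 + Real.exp θ) ≤ c := by
      rw [hc]; gcongr
    have ec : 1 - 1 / (1 + Real.exp θ) = c := by
      rw [hc]; field_simp; ring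
    rw [abs_le]
    constructor <;> linarith
  have hScont : Continuous S := by
    have hSfun : S = fun v => 1 / (1 + Real.exp (-μ * v + θ)) - 1 / (1 + Real.exp θ) :=
      funext hS
    rw [hSfun]
    apply Continuous.sub _ continuous_const
    apply Continuous.div continuous_const
      (continuous_const.add (Real.continuous_exp.comp
        ((continuous_const.mul continuous_id).add continuous_const)))
    intro v
    show (1 : ℝ) + Real.exp (-μ * v + θ) ≠ 0
    positivity
  have hSu : AEStronglyMeasurable (fun y => S (u y)) volume :=
    ((hScont.measurable.comp hum)).aestronglyMeasurable
  have hgsup : ∀ x, |g x| ≤ ⨆ x, |g x| := fun x =>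
    le_ciSup ⟨Cg, by rintro _ ⟨y, rfl⟩; exact hCg y⟩ x
  apply ciSup_le
  intro x
  have hWx : Integrable (fun y => W (x - y)) := hW.comp_sub_left x
  have hint : Integrable (fun y => W (x - y) * S (u y)) := by
    have := hWx.bdd_mul hSu (Filter.Eventually.of_forall fun y => by
      simpa using hSb (u y))
    exact this.congr (Filter.Eventually.of_forall fun y => mul_comm _ _)
  have key : |∫ y, W (x - y) * S (u y)| ≤ c * ∫ y, |W y| := by
    calc |∫ y, W (x - y) * S (u y)| ≤ ∫ y, |W (x - y)| * |S (u y)| :=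
          by simpa using norm_integral_le_integral_norm (fun y => W (x - y) * S (u y))
      _ ≤ ∫ y, |W (x - y)| * c := by
          apply integral_mono
            (hint.abs.congr (Filter.Eventually.of_forall fun y => abs_mul _ _))
            (hWx.abs.mul_const c)
          intro y
          exact mul_le_mul_of_nonneg_left (hSb _) (abs_nonneg _)
      _ = (∫ y, |W (x - y)|) * c := integral_mul_const _ _
      _ = (∫ y, |W y|) * c := by
          rw [integral_sub_left_eq_self (fun y => |W y|) volume x]
      _ = c * ∫ y, |W y| := mul_comm _ _
  calc |u x| = |(∫ y, W (x - y) * S (u y)) + g x| := by rw [heq x]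
    _ ≤ |∫ y, W (x - y) * S (u y)| + |g x| := abs_add_le _ _
    _ ≤ c * (∫ y, |W y|) + ⨆ x, |g x| := add_le_add key (hgsup x)
end

section
/- Let W : ℝ² → ℝ be integrable, let μ, θ > 0 with firing-rate function S, and let g : ℝ² → ℝ. Suppose u : [0,∞) × ℝ² → ℝ is such that u(t,·) is measurable for each t and, for a fixed x ∈ ℝ², the map t ↦ u(t,x) is differentiable on [0,∞) with ∂_t u(t,x) = −u(t,x) + ∫_{ℝ²} W(x − y) S(u(t,y)) dy + g(x) for all t ≥ 0. Then for all t ≥ 0, |u(t,x)| ≤ e^{-t} |u(0,x)| + (1 − e^{-t}) ( (e^{θ}/(1 + e^{θ})) ∫_{ℝ²} |W| + |g(x)| ). In particular the dynamics are dissipative: lim sup_{t→∞} |u(t,x)| ≤ (e^{θ}/(1+e^{θ})) ‖W‖_{L¹} + |g(x)|. -/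
open MeasureTheory Real Filter

lemma auxODE (f : ℝ → ℝ) (f' : ℝ → ℝ) (C : ℝ)
    (hd : ∀ t : ℝ, 0 ≤ t → HasDerivWithinAt f (f' t) (Set.Ici (0:ℝ)) t)
    (hb : ∀ t : ℝ, 0 ≤ t → f' t + f t ≤ C) :
    ∀ t : ℝ, 0 ≤ t → f t ≤ Real.exp (-t) * f 0 + (1 - Real.exp (-t)) * C := by
  intro t ht
  set G : ℝ → ℝ := fun s => Real.exp s * f s - Real.exp s * C with hG
  have hGd : ∀ s : ℝ, 0 ≤ s →
      HasDerivWithinAt G (Real.exp s * (f' s + f s - C)) (Set.Ici (0:ℝ)) s := by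
    intro s hs
    have h1 : HasDerivWithinAt (fun s => Real.exp s * f s - Real.exp s * C)
        (Real.exp s * f s + Real.exp s * f' s - Real.exp s * C) (Set.Ici (0:ℝ)) s :=
      ((Real.hasDerivAt_exp s).hasDerivWithinAt.mul (hd s hs)).sub
      (((Real.hasDerivAt_exp s).mul_const C).hasDerivWithinAt)
    convert h1 using 1
    ring
  have hA : AntitoneOn G (Set.Ici (0:ℝ)) := by
    apply antitoneOn_of_deriv_nonpos (convex_Ici 0)
    · exact fun s hs => (hGd s hs).continuousWithinAt
    · intro s hs
      rw [interior_Ici] at hs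
      exact ((hGd s hs.le).hasDerivAt (Ici_mem_nhds hs)).differentiableAt.differentiableWithinAt
    · intro s hs
      rw [interior_Ici] at hs
      rw [((hGd s hs.le).hasDerivAt (Ici_mem_nhds hs)).deriv]
      have := hb s hs.le
      nlinarith [Real.exp_pos s]
  have h0 : G t ≤ G 0 := hA Set.self_mem_Ici ht ht
  have hmul : Real.exp (-t) * Real.exp t = 1 := by
    rw [← Real.exp_add]; simp
  have h0' : Real.exp t * f t - Real.exp t * C ≤ f 0 - C := by
    simpa [hG] using h0
  calc f t = Real.exp (-t) * (Real.exp t * f t) := by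
        rw [← mul_assoc, hmul, one_mul]
    _ ≤ Real.exp (-t) * (f 0 - C + Real.exp t * C) := by
        apply mul_le_mul_of_nonneg_left _ (Real.exp_nonneg _)
        linarith
    _ = Real.exp (-t) * f 0 + (1 - Real.exp (-t)) * C := by
        linear_combination C * hmul

/-- Pointwise dissipativity bound: if, at a fixed `x`, `t ↦ u(t,x)` is
differentiable on `[0,∞)` with
`∂_t u(t,x) = −u(t,x) + ∫ W(x−y) S(u(t,y)) dy + g(x)` (with `W` integrable, `u(t,·)`
measurable for each `t`), then for all `t ≥ 0`
`|u(t,x)| ≤ e^{-t}|u(0,x)| + (1 − e^{-t})((e^θ/(1+e^θ)) ∫|W| + |g(x)|)`, and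
`limsup_{t→∞} |u(t,x)| ≤ (e^θ/(1+e^θ)) ‖W‖_{L¹} + |g(x)|`. -/
theorem stmt10 (W : EuclideanSpace ℝ (Fin 2) → ℝ) (hW : Integrable W)
    (μ θ : ℝ) (hμ : 0 < μ) (hθ : 0 < θ)
    (S : ℝ → ℝ)
    (hS : ∀ v, S v = 1 / (1 + Real.exp (-μ * v + θ)) - 1 / (1 + Real.exp θ))
    (g : EuclideanSpace ℝ (Fin 2) → ℝ)
    (u : ℝ → EuclideanSpace ℝ (Fin 2) → ℝ)
    (x : EuclideanSpace ℝ (Fin 2))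
    (hmeas : ∀ t, Measurable (u t))
    (hderiv : ∀ t : ℝ, 0 ≤ t →
      HasDerivWithinAt (fun s => u s x)
        (-(u t x) + (∫ y, W (x - y) * S (u t y)) + g x) (Set.Ici (0 : ℝ)) t) :
    (∀ t : ℝ, 0 ≤ t →
      |u t x| ≤ Real.exp (-t) * |u 0 x| +
        (1 - Real.exp (-t)) *
          (Real.exp θ / (1 + Real.exp θ) * (∫ y, |W y|) + |g x|)) ∧
    limsup (fun t => |u t x|) atTop ≤
      Real.exp θ / (1 + Real.exp θ) * (∫ y, |W y|) + |g x| := by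
  set K : ℝ := Real.exp θ / (1 + Real.exp θ) with hK
  have hexpθ : 0 < 1 + Real.exp θ := by positivity
  have hSbound : ∀ v, |S v| ≤ K := by
    intro v
    rw [hS v, abs_le]
    have h1 : 0 < 1 + Real.exp (-μ * v + θ) := by positivity
    have h2 : (1:ℝ) ≤ Real.exp θ := Real.one_le_exp hθ.le
    constructor
    · have hB : 1 / (1 + Real.exp θ) ≤ K := by
        rw [hK, div_le_div_iff₀ hexpθ hexpθ]; nlinarith
      have hA : 0 < 1 / (1 + Real.exp (-μ * v + θ)) := by positivity
      linarith
    · have hA : 1 / (1 + Real.exp (-μ * v + θ)) ≤ 1 := by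
        rw [div_le_one h1]; nlinarith [Real.exp_pos (-μ * v + θ)]
      have hE : 1 - 1 / (1 + Real.exp θ) = K := by
        rw [hK]; field_simp; ring
      linarith
  have hWint : 0 ≤ ∫ y, |W y| := integral_nonneg fun y => abs_nonneg _
  have hKpos : 0 ≤ K := by positivity
  set C : ℝ := K * (∫ y, |W y|) + |g x| with hCdef
  have hC0 : 0 ≤ C := by positivity
  have hIb : ∀ t, |(∫ y, W (x - y) * S (u t y)) + g x| ≤ C := by
    intro t
    have hWx : Integrable (fun y => |W (x - y)|) := (hW.comp_sub_left x).abs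
    have h1 : |∫ y, W (x - y) * S (u t y)| ≤ K * ∫ y, |W y| := by
      calc |∫ y, W (x - y) * S (u t y)| ≤ ∫ y, |W (x - y) * S (u t y)| := by
            have := norm_integral_le_integral_norm (μ := volume)
              (fun y => W (x - y) * S (u t y))
            simpa [Real.norm_eq_abs, abs_mul] using this
        _ ≤ ∫ y, K * |W (x - y)| := by
            apply integral_mono_of_nonneg
            · filter_upwards with y using abs_nonneg _
            · exact hWx.const_mul K
            · filter_upwards with y
              rw [abs_mul, mul_comm K]
              exact mul_le_mul_of_nonneg_left (hSbound _) (abs_nonneg _)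
        _ = K * ∫ y, |W (x - y)| := MeasureTheory.integral_const_mul _ _
        _ = K * ∫ y, |W y| := by
            rw [integral_sub_left_eq_self (fun y => |W y|) volume x]
    calc |(∫ y, W (x - y) * S (u t y)) + g x|
        ≤ |∫ y, W (x - y) * S (u t y)| + |g x| := abs_add_le _ _
      _ ≤ C := by rw [hCdef]; linarith
  have hupper := auxODE (fun s => u s x)
    (fun t => -(u t x) + (∫ y, W (x - y) * S (u t y)) + g x) C hderiv
    (fun t _ => by
      have := (abs_le.mp (hIb t)).2
      linarith)
  have hlower := auxODE (fun s => -(u s x))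
    (fun t => -(-(u t x) + (∫ y, W (x - y) * S (u t y)) + g x)) C
    (fun t ht => (hderiv t ht).neg)
    (fun t _ => by
      have := (abs_le.mp (hIb t)).1
      linarith)
  have hmain : ∀ t : ℝ, 0 ≤ t → |u t x| ≤ Real.exp (-t) * |u 0 x| + (1 - Real.exp (-t)) * C := by
    intro t ht
    have h1 := hupper t ht
    have h2 := hlower t ht
    have he : 0 ≤ Real.exp (-t) := Real.exp_nonneg _
    have he1 : Real.exp (-t) ≤ 1 := Real.exp_le_one_iff.mpr (by linarith)
    have ha1 : u 0 x ≤ |u 0 x| := le_abs_self _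
    have ha2 : -|u 0 x| ≤ u 0 x := neg_abs_le _
    rw [abs_le]
    constructor <;> nlinarith
  refine ⟨hmain, ?_⟩
  have hev : ∀ᶠ t in atTop, |u t x| ≤ Real.exp (-t) * |u 0 x| + C := by
    filter_upwards [eventually_ge_atTop (0:ℝ)] with t ht
    have h1 := hmain t ht
    have he : 0 ≤ Real.exp (-t) := Real.exp_nonneg _
    nlinarith
  have htend : Tendsto (fun t : ℝ => Real.exp (-t) * |u 0 x| + C) atTop (nhds C) := by
    have h0 : Tendsto (fun t : ℝ => Real.exp (-t)) atTop (nhds 0) := by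
      exact Real.tendsto_exp_atBot.comp tendsto_neg_atTop_atBot
    have := (h0.mul_const |u 0 x|).add_const C
    simpa using this
  have hcob : IsCoboundedUnder (· ≤ ·) atTop (fun t => |u t x|) := by
    exact IsBoundedUnder.isCoboundedUnder_le (isBoundedUnder_of ⟨0, fun t => abs_nonneg _⟩)
  have hbd : IsBoundedUnder (· ≤ ·) atTop (fun t : ℝ => Real.exp (-t) * |u 0 x| + C) :=
    htend.isBoundedUnder_le
  calc limsup (fun t => |u t x|) atTop
      ≤ limsup (fun t : ℝ => Real.exp (-t) * |u 0 x| + C) atTop :=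
        limsup_le_limsup hev hcob hbd
    _ = C := htend.limsup_eq
end

section
/- Let A, C, D, M ∈ ℝ and B > 0, and let W₈ : ℝ² → ℝ be integrable with Fourier transform ŵ₈(k) = ∫_{ℝ²} W₈(x) e^{-i⟨k,x⟩} dx equal to −A(‖k‖² − C)(‖k‖² − D)/(B + (‖k‖² − M)⁴) for every k ∈ ℝ². Then for every Schwartz function f : ℝ² → ℝ, the eighth-order identity B (W₈ ⋆ f) + (M + Δ)⁴ (W₈ ⋆ f) = −A (Δ + C)(Δ + D) f holds everywhere on ℝ², where (M + Δ)⁴ denotes the four-fold composition of the operator g ↦ M g + Δg, and (Δ + C)(Δ + D) f = Δ(Δf) + (C + D) Δf + C D f. -/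
open MeasureTheory
set_option maxHeartbeats 1000000
set_option synthInstance.maxHeartbeats 400000


/-- The Euclidean Laplacian `Δg = ∂²g/∂x₁² + ∂²g/∂x₂²` on `ℝ²`, expressed via iterated
Fréchet derivatives in the coordinate directions. -/
noncomputable def lap (g : EuclideanSpace ℝ (Fin 2) → ℝ) :
    EuclideanSpace ℝ (Fin 2) → ℝ :=
  fun x => ∑ i : Fin 2,
    fderiv ℝ (fun y => fderiv ℝ g y (EuclideanSpace.single i (1 : ℝ))) x
      (EuclideanSpace.single i (1 : ℝ))

/-- The Helmholtz-type operator `g ↦ M g + Δ g`; its 4-fold iterate is `(M + Δ)⁴`. -/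
noncomputable def helmholtz (M : ℝ) (g : EuclideanSpace ℝ (Fin 2) → ℝ) :
    EuclideanSpace ℝ (Fin 2) → ℝ :=
  fun x => M * g x + lap g x

namespace Stmt13Aux

open Real Complex SchwartzMap
open scoped RealInnerProductSpace FourierTransform Convolution

abbrev V2 := EuclideanSpace ℝ (Fin 2)

noncomputable def ee (i : Fin 2) : V2 := EuclideanSpace.single i (1 : ℝ)

variable {F : Type*} [NormedAddCommGroup F] [NormedSpace ℝ F]

noncomputable def pderivCLM (𝕜 : Type*) [RCLike 𝕜] [NormedSpace 𝕜 F]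
    (m : V2) : 𝓢(V2, F) →L[𝕜] 𝓢(V2, F) :=
  SchwartzMap.evalCLM 𝕜 V2 F m ∘L fderivCLM 𝕜 V2 F

lemma pderivCLM_apply (𝕜 : Type*) [RCLike 𝕜] [NormedSpace 𝕜 F]
    (m : V2) (f : 𝓢(V2, F)) (x : V2) :
    pderivCLM 𝕜 m f x = fderiv ℝ f x m := rfl

noncomputable def lapS (u : 𝓢(V2, F)) : 𝓢(V2, F) :=
  ∑ i : Fin 2, pderivCLM ℝ (ee i) (pderivCLM ℝ (ee i) u)

lemma lapS_apply (u : 𝓢(V2, F)) (x : V2) :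
    lapS u x = ∑ i : Fin 2, pderivCLM ℝ (ee i) (pderivCLM ℝ (ee i) u) x := by
  simp [lapS, Fin.sum_univ_two]

lemma schwartz_bound (u : 𝓢(V2, F)) : ∃ C, ∀ x, ‖u x‖ ≤ C :=
  ⟨SchwartzMap.seminorm ℝ 0 0 u, fun x => u.norm_le_seminorm ℝ x⟩

/-- coe of lapS -/
lemma lap_coe (u : 𝓢(V2, ℝ)) : lap ⇑u = ⇑(lapS u) := by
  funext x
  rw [lap, lapS_apply]
  refine Finset.sum_congr rfl fun i _ => ?_
  have h1 : (fun y => fderiv ℝ (⇑u) y (ee i)) = ⇑(pderivCLM ℝ (ee i) u) :=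
    funext fun y => (pderivCLM_apply ℝ (ee i) u y).symm
  rw [show (EuclideanSpace.single i (1:ℝ)) = ee i from rfl, h1,
    ← pderivCLM_apply ℝ (ee i) (pderivCLM ℝ (ee i) u) x]

noncomputable def hsOp (M : ℝ) : 𝓢(V2, ℝ) → 𝓢(V2, ℝ) := fun u => M • u + lapS u

section Conv

variable {W : V2 → ℝ} (hW : Integrable W)

noncomputable def cv (W : V2 → ℝ) (u : 𝓢(V2, ℝ)) : V2 → ℝ :=
  fun x => ∫ t, W t * u (x - t)

include hW in
lemma conv_smul_integrable {g : V2 → F} (hg : Continuous g) {Cg : ℝ}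
    (hCg : ∀ y, ‖g y‖ ≤ Cg) (x : V2) :
    Integrable (fun t => W t • g (x - t)) := by
  have meas : AEStronglyMeasurable (fun t => W t • g (x - t)) volume :=
    hW.aestronglyMeasurable.smul
      ((hg.comp (continuous_const.sub continuous_id)).aestronglyMeasurable)
  refine ((hW.norm.mul_const Cg)).mono' meas (Filter.Eventually.of_forall fun t => ?_)
  rw [norm_smul]
  exact mul_le_mul_of_nonneg_left (hCg _) (norm_nonneg _)

include hW in
lemma cv_integrand_integrable (u : 𝓢(V2, ℝ)) (x : V2) :
    Integrable (fun t => W t * u (x - t)) := by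
  obtain ⟨C, hC⟩ := schwartz_bound u
  simpa [smul_eq_mul] using conv_smul_integrable hW u.continuous hC x

include hW in
lemma cv_add (u v : 𝓢(V2, ℝ)) (x : V2) :
    cv W (u + v) x = cv W u x + cv W v x := by
  simp only [cv, SchwartzMap.add_apply, mul_add]
  exact integral_add (cv_integrand_integrable hW u x) (cv_integrand_integrable hW v x)

omit hW in
lemma cv_smul (r : ℝ) (u : 𝓢(V2, ℝ)) (x : V2) :
    cv W (r • u) x = r * cv W u x := by
  simp only [cv, SchwartzMap.smul_apply, smul_eq_mul]
  rw [← integral_const_mul]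
  congr 1; funext t; ring

include hW in
lemma hasFDerivAt_cv (u : 𝓢(V2, ℝ)) (x : V2) :
    HasFDerivAt (cv W u) (∫ t, W t • fderiv ℝ (⇑u) (x - t)) x := by
  obtain ⟨C1, hC1'⟩ := schwartz_bound (fderivCLM ℝ V2 ℝ u)
  have hC1 : ∀ y, ‖fderiv ℝ (⇑u) y‖ ≤ C1 := fun y => by
    simpa [fderivCLM_apply] using hC1' y
  have hcont : Continuous fun y => fderiv ℝ (⇑u) y := by
    have := (fderivCLM ℝ V2 ℝ u).continuous
    exact this
  have key := hasFDerivAt_integral_of_dominated_of_fderiv_le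
    (F := fun (x' : V2) (t : V2) => W t * u (x' - t))
    (F' := fun (x' : V2) (t : V2) => W t • fderiv ℝ (⇑u) (x' - t))
    (μ := volume) (x₀ := x) (bound := fun t => ‖W t‖ * C1)
    (hs := Filter.univ_mem)
    ?_ ?_ ?_ ?_ ?_ ?_
  · exact key
  · exact Filter.Eventually.of_forall fun x' =>
      (cv_integrand_integrable hW u x').aestronglyMeasurable
  · exact cv_integrand_integrable hW u x
  · exact (conv_smul_integrable hW hcont hC1 x).aestronglyMeasurable
  · refine Filter.Eventually.of_forall fun t => fun x' _ => ?_
    rw [norm_smul (W t) (fderiv ℝ (⇑u) (x' - t))]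
    exact mul_le_mul_of_nonneg_left (hC1 _) (norm_nonneg _)
  · exact hW.norm.mul_const C1
  · refine Filter.Eventually.of_forall fun t => fun x' _ => ?_
    have h1 : HasFDerivAt (fun z : V2 => u (z - t)) (fderiv ℝ (⇑u) (x' - t)) x' := by
      have h0 := (u.differentiableAt (x := x' - t)).hasFDerivAt
      have h2 := h0.comp x' ((hasFDerivAt_id x').sub_const t)
      exact h2.congr_fderiv (ContinuousLinearMap.comp_id _)
    exact h1.const_mul (W t)

include hW in
lemma fderiv_cv (u : 𝓢(V2, ℝ)) (x : V2) (m : V2) :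
    fderiv ℝ (cv W u) x m = cv W (pderivCLM ℝ m u) x := by
  obtain ⟨C1, hC1'⟩ := schwartz_bound (fderivCLM ℝ V2 ℝ u)
  have hC1 : ∀ y, ‖fderiv ℝ (⇑u) y‖ ≤ C1 := fun y => by
    simpa [fderivCLM_apply] using hC1' y
  have hcont : Continuous fun y => fderiv ℝ (⇑u) y := by
    have := (fderivCLM ℝ V2 ℝ u).continuous
    exact this
  rw [(hasFDerivAt_cv hW u x).fderiv]
  rw [ContinuousLinearMap.integral_apply (conv_smul_integrable hW hcont hC1 x)]
  simp only [ContinuousLinearMap.coe_smul', Pi.smul_apply, smul_eq_mul]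
  simp only [cv, pderivCLM_apply]

include hW in
lemma lap_cv (u : 𝓢(V2, ℝ)) : lap (cv W u) = cv W (lapS u) := by
  funext x
  rw [lap]
  have h1 : ∀ i : Fin 2, (fun y => fderiv ℝ (cv W u) y (ee i)) =
      cv W (pderivCLM ℝ (ee i) u) := fun i => funext fun y => fderiv_cv hW u y (ee i)
  have h2 : ∀ i : Fin 2,
      fderiv ℝ (fun y => fderiv ℝ (cv W u) y (EuclideanSpace.single i (1:ℝ))) x
        (EuclideanSpace.single i (1:ℝ)) =
      cv W (pderivCLM ℝ (ee i) (pderivCLM ℝ (ee i) u)) x := fun i => by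
    rw [show (EuclideanSpace.single i (1:ℝ)) = ee i from rfl, h1 i]
    exact fderiv_cv hW (pderivCLM ℝ (ee i) u) x (ee i)
  rw [Fin.sum_univ_two, h2 0, h2 1, lapS, Fin.sum_univ_two]
  exact (cv_add hW _ _ x).symm

include hW in
lemma helm_cv (M : ℝ) (u : 𝓢(V2, ℝ)) :
    helmholtz M (cv W u) = cv W (M • u + lapS u) := by
  funext x
  rw [helmholtz, lap_cv hW u, cv_add hW _ _ x, cv_smul (r := M) u x]

include hW in
lemma iter_cv (M : ℝ) : ∀ (n : ℕ) (u : 𝓢(V2, ℝ)),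
    (helmholtz M)^[n] (cv W u) = cv W ((hsOp M)^[n] u) := by
  intro n
  induction n with
  | zero => intro u; rfl
  | succ n ih =>
    intro u
    rw [Function.iterate_succ_apply, Function.iterate_succ_apply, helm_cv hW M u]
    exact ih _

end Conv

section Fourier

/-- Complexification of a real Schwartz function. -/
noncomputable def cplxCLM : 𝓢(V2, ℝ) →L[ℝ] 𝓢(V2, ℂ) :=
  mkCLM (fun f x => (f x : ℂ))
    (fun f g x => by simp [SchwartzMap.add_apply])
    (fun a f x => by simp [SchwartzMap.smul_apply, Complex.real_smul])
    (fun f => Complex.ofRealCLM.contDiff.comp (f.smooth ⊤))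
    (fun n => ⟨{n}, 1, zero_le_one, fun f x => by
      have h : ‖iteratedFDeriv ℝ n.2 (fun y => ((f y : ℝ) : ℂ)) x‖
          = ‖iteratedFDeriv ℝ n.2 (⇑f) x‖ := by
        have := Complex.ofRealLI.norm_iteratedFDeriv_comp_left (i := n.2) (f.smooth ⊤).contDiffAt (x := x)
          (by exact_mod_cast le_top)
        exact this
      rw [h, one_mul, Finset.sup_singleton]
      exact le_seminorm ℝ n.1 n.2 f x⟩)

lemma cplx_apply (u : 𝓢(V2, ℝ)) (x : V2) : cplxCLM u x = (u x : ℂ) := rfl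

lemma cplx_pderiv (m : V2) (u : 𝓢(V2, ℝ)) :
    pderivCLM ℝ m (cplxCLM u) = cplxCLM (pderivCLM ℝ m u) := by
  ext x
  simp only [pderivCLM_apply, cplx_apply]
  have h : fderiv ℝ (⇑(cplxCLM u)) x = Complex.ofRealCLM.comp (fderiv ℝ (⇑u) x) := by
    have h0 : (⇑(cplxCLM u)) = (⇑Complex.ofRealCLM ∘ ⇑u) := rfl
    rw [h0]
    exact (Complex.ofRealCLM.hasFDerivAt.comp x u.differentiableAt.hasFDerivAt).fderiv
  rw [h]
  rfl

lemma cplx_lapS (u : 𝓢(V2, ℝ)) : lapS (cplxCLM u) = cplxCLM (lapS u) := by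
  rw [lapS, lapS, map_sum]
  exact Finset.sum_congr rfl fun i _ => by rw [cplx_pderiv, cplx_pderiv]

variable {E : Type*} [NormedAddCommGroup E] [NormedSpace ℂ E]

lemma modInt {g : V2 → E} (hg : Integrable g) (k : V2) :
    Integrable fun v : V2 =>
      Complex.exp (((-2 * π * ⟪v, k⟫ : ℝ) : ℂ) * Complex.I) • g v := by
  have hc : Continuous fun v : V2 =>
      Complex.exp (((-2 * π * ⟪v, k⟫ : ℝ) : ℂ) * Complex.I) := by
    have h1 : Continuous fun v : V2 => (-2 * π * ⟪v, k⟫ : ℝ) :=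
      continuous_const.mul (continuous_id.inner continuous_const)
    exact Complex.continuous_exp.comp ((Complex.continuous_ofReal.comp h1).mul continuous_const)
  refine hg.norm.mono' (hc.aestronglyMeasurable.smul hg.aestronglyMeasurable)
    (Filter.Eventually.of_forall fun v => ?_)
  rw [norm_smul,
    show ‖Complex.exp (((-2 * π * ⟪v, k⟫ : ℝ) : ℂ) * Complex.I)‖ = 1 from by
      exact Complex.norm_exp_ofReal_mul_I _, one_mul]

lemma FT_add (P Q : 𝓢(V2, ℂ)) (k : V2) :
    𝓕 (⇑(P + Q)) k = 𝓕 (⇑P) k + 𝓕 (⇑Q) k := by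
  have h : (⇑(P + Q)) = fun x => P x + Q x := funext fun x => rfl
  rw [h, Real.fourier_eq', Real.fourier_eq', Real.fourier_eq',
    ← integral_add (modInt P.integrable k) (modInt Q.integrable k)]
  congr 1
  funext v
  exact smul_add _ _ _

lemma FT_smulR (r : ℝ) (P : 𝓢(V2, ℂ)) (k : V2) :
    𝓕 (⇑(r • P)) k = (r : ℂ) * 𝓕 (⇑P) k := by
  have h : (⇑(r • P)) = fun x => r • P x := funext fun x => rfl
  rw [h, Real.fourier_eq', Real.fourier_eq']
  have : ∀ v : V2, Complex.exp (((-2 * π * ⟪v, k⟫ : ℝ) : ℂ) * Complex.I) • (r • P v)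
      = r • (Complex.exp (((-2 * π * ⟪v, k⟫ : ℝ) : ℂ) * Complex.I) • P v) :=
    fun v => smul_comm _ _ _
  simp_rw [this]
  rw [integral_smul, Complex.real_smul]

lemma FT_pderiv (P : 𝓢(V2, ℂ)) (m k : V2) :
    𝓕 (⇑(pderivCLM ℝ m P)) k = (2 * π * Complex.I * (⟪k, m⟫ : ℝ)) * 𝓕 (⇑P) k := by
  have hint : Integrable (fderiv ℝ (⇑P)) := by
    have h0 : (⇑(fderivCLM ℝ V2 ℂ P)) = fderiv ℝ (⇑P) := funext fun x => fderivCLM_apply (𝕜 := ℝ) P x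
    rw [← h0]
    exact (fderivCLM ℝ V2 ℂ P).integrable
  have h1 : (⇑(pderivCLM ℝ m P)) = fun x => fderiv ℝ (⇑P) x m :=
    funext fun x => pderivCLM_apply ℝ m P x
  rw [h1, ← Real.fourier_continuousLinearMap_apply hint,
    Real.fourier_fderiv P.integrable P.differentiable hint]
  simp only [VectorFourier.fourierSMulRight_apply, ContinuousLinearMap.neg_apply,
    innerSL_apply_apply, neg_smul, smul_neg, neg_neg]
  rw [Complex.real_smul, smul_eq_mul]
  simp only [show ∀ a b : V2, (innerSL ℝ a) b = ⟪a, b⟫ from fun _ _ => rfl]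
  ring

lemma FT_lap (P : 𝓢(V2, ℂ)) (k : V2) :
    𝓕 (⇑(lapS P)) k = ((-(4 * π ^ 2 * ‖k‖ ^ 2) : ℝ) : ℂ) * 𝓕 (⇑P) k := by
  have hsum : lapS P = pderivCLM ℝ (ee 0) (pderivCLM ℝ (ee 0) P)
      + pderivCLM ℝ (ee 1) (pderivCLM ℝ (ee 1) P) := by
    rw [lapS, Fin.sum_univ_two]
  rw [hsum, FT_add, FT_pderiv, FT_pderiv, FT_pderiv, FT_pderiv]
  have hik : ∀ i : Fin 2, (⟪k, ee i⟫ : ℝ) = k i := fun i => by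
    simp [ee, EuclideanSpace.inner_single_right]
  have hnorm : ‖k‖ ^ 2 = k 0 ^ 2 + k 1 ^ 2 := by
    rw [EuclideanSpace.norm_eq, Real.sq_sqrt (by positivity)]
    simp [Fin.sum_univ_two, Real.norm_eq_abs, sq_abs]
  rw [hik 0, hik 1, hnorm]
  push_cast
  linear_combination (4 * (π : ℂ) ^ 2 * ((k 0 : ℂ) ^ 2 + (k 1 : ℂ) ^ 2) * 𝓕 (⇑P) k) *
    Complex.I_sq

lemma FTW {Wf : V2 → ℝ} {A C D M B : ℝ}
    (hwHat : ∀ k : V2,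
      (∫ x, (Wf x : ℂ) * Complex.exp (-Complex.I * ((inner ℝ k x : ℝ) : ℂ))) =
        ((-A * (‖k‖ ^ 2 - C) * (‖k‖ ^ 2 - D) / (B + (‖k‖ ^ 2 - M) ^ 4) : ℝ) : ℂ))
    (k : V2) :
    𝓕 (fun x => ((Wf x : ℝ) : ℂ)) k =
      ((-A * (4 * π ^ 2 * ‖k‖ ^ 2 - C) * (4 * π ^ 2 * ‖k‖ ^ 2 - D)
        / (B + (4 * π ^ 2 * ‖k‖ ^ 2 - M) ^ 4) : ℝ) : ℂ) := by
  have h := hwHat ((2 * π) • k)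
  have hn : ‖(2 * π) • k‖ ^ 2 = 4 * π ^ 2 * ‖k‖ ^ 2 := by
    rw [norm_smul]
    rw [Real.norm_eq_abs, _root_.abs_of_nonneg (by positivity : (0:ℝ) ≤ 2 * π)]
    ring
  rw [hn] at h
  rw [Real.fourier_eq', ← h]
  congr 1
  funext x
  have hinner : (inner ℝ ((2 * π) • k) x : ℝ) = 2 * π * ⟪x, k⟫ := by
    rw [real_inner_smul_left, real_inner_comm]
  rw [hinner, smul_eq_mul, mul_comm]
  congr 1
  push_cast
  ring

lemma FT_conv {g h : V2 → ℂ} (hg : Integrable g) (hh : Integrable h) (k : V2) :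
    𝓕 (g ⋆[ContinuousLinearMap.mul ℂ ℂ, volume] h) k = 𝓕 g k * 𝓕 h k := by
  set χ : V2 → ℂ := fun v => Complex.exp (((-2 * π * ⟪v, k⟫ : ℝ) : ℂ) * Complex.I) with hχ
  have hχmul : ∀ t x : V2, χ t * χ (x - t) = χ x := by
    intro t x
    rw [hχ]
    simp only
    rw [← Complex.exp_add]
    congr 1
    have : ⟪t, k⟫ + ⟪x - t, k⟫ = ⟪x, k⟫ := by rw [inner_sub_left]; ring
    push_cast [← this]
    ring
  have hgI : Integrable (fun v => χ v * g v) := by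
    simpa only [smul_eq_mul] using modInt hg k
  have hhI : Integrable (fun v => χ v * h v) := by
    simpa only [smul_eq_mul] using modInt hh k
  have step1 : 𝓕 (g ⋆[ContinuousLinearMap.mul ℂ ℂ, volume] h) k
      = ∫ x, ((fun t => χ t * g t) ⋆[ContinuousLinearMap.mul ℂ ℂ, volume]
          (fun t => χ t * h t)) x := by
    rw [Real.fourier_eq']
    congr 1
    funext x
    rw [convolution_def, convolution_def]
    simp only [ContinuousLinearMap.mul_apply']
    rw [show (Complex.exp (((-2 * π * ⟪x, k⟫ : ℝ) : ℂ) * Complex.I))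
        • (∫ t, g t * h (x - t)) = χ x * ∫ t, g t * h (x - t) from by
          rw [smul_eq_mul],
      ← integral_const_mul]
    congr 1
    funext t
    rw [← hχmul t x]
    ring
  rw [step1]
  have step2 := integral_convolution (ContinuousLinearMap.mul ℂ ℂ)
    (μ := volume) (ν := volume) hgI hhI
  rw [step2]
  simp only [ContinuousLinearMap.mul_apply']
  rw [Real.fourier_eq', Real.fourier_eq']
  congr 1 <;> · congr 1; funext v; rw [smul_eq_mul]

lemma conv_eq_of_fourier {W : V2 → ℝ} (hW : Integrable W) (g h : 𝓢(V2, ℝ))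
    (hFT : ∀ k : V2,
      𝓕 (fun y => ((W y : ℝ) : ℂ)) k * 𝓕 (⇑(cplxCLM g)) k = 𝓕 (⇑(cplxCLM h)) k)
    (x : V2) : cv W g x = h x := by
  have hW' : Integrable (fun y => ((W y : ℝ) : ℂ)) := hW.ofReal
  set G := cplxCLM g with hGdef
  set H := cplxCLM h with hHdef
  set CV : V2 → ℂ :=
    (fun y => ((W y : ℝ) : ℂ)) ⋆[ContinuousLinearMap.mul ℂ ℂ, volume] ⇑G with hCV
  have hconv : ∀ y, ((cv W g y : ℝ) : ℂ) = CV y := by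
    intro y
    rw [hCV, convolution_def]
    simp only [ContinuousLinearMap.mul_apply']
    rw [show (∫ t, ((W t : ℝ) : ℂ) * G (y - t))
        = ∫ t, ((W t * g (y - t) : ℝ) : ℂ) from by
      congr 1
      funext t
      push_cast
      rfl]
    rw [show cv W g y = ∫ t, W t * g (y - t) from rfl]
    exact (integral_ofReal (𝕜 := ℂ)).symm
  obtain ⟨CG, hCG⟩ := schwartz_bound G
  have hCVcont : Continuous CV := by
    refine BddAbove.continuous_convolution_right_of_integrable
      (L := ContinuousLinearMap.mul ℂ ℂ) ⟨CG, ?_⟩ hW' G.continuous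
    rintro r ⟨y, rfl⟩
    exact hCG y
  have hCVint : Integrable CV := hW'.integrable_convolution _ G.integrable
  have hFT2 : 𝓕 CV = 𝓕 (⇑H) := funext fun k => by
    rw [hCV, FT_conv hW' G.integrable k]
    exact hFT k
  have hHF : Integrable (𝓕 (⇑H)) := by
    rw [← SchwartzMap.fourier_coe]
    exact (𝓕 H).integrable
  have hFint : Integrable (𝓕 CV) := by rw [hFT2]; exact hHF
  have h1 := hCVcont.fourierInv_fourier_eq hCVint hFint
  have h2 := H.continuous.fourierInv_fourier_eq H.integrable hHF
  have hEq : CV = ⇑H := by rw [← h1, hFT2, h2]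
  have hx := hconv x
  rw [hEq, hHdef, cplx_apply] at hx
  exact_mod_cast hx

lemma FT_cplx_lap (u : 𝓢(V2, ℝ)) (k : V2) :
    𝓕 (⇑(cplxCLM (lapS u))) k
      = ((-(4 * π ^ 2 * ‖k‖ ^ 2) : ℝ) : ℂ) * 𝓕 (⇑(cplxCLM u)) k := by
  rw [← cplx_lapS, FT_lap]

lemma FT_hs_iter (M : ℝ) (k : V2) : ∀ (n : ℕ) (u : 𝓢(V2, ℝ)),
    𝓕 (⇑(cplxCLM ((hsOp M)^[n] u))) k
      = (((M - 4 * π ^ 2 * ‖k‖ ^ 2) ^ n : ℝ) : ℂ) * 𝓕 (⇑(cplxCLM u)) k := by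
  intro n
  induction n with
  | zero => intro u; simp
  | succ n ih =>
    intro u
    rw [Function.iterate_succ_apply, ih (hsOp M u)]
    have hstep : 𝓕 (⇑(cplxCLM (hsOp M u))) k
        = ((M - 4 * π ^ 2 * ‖k‖ ^ 2 : ℝ) : ℂ) * 𝓕 (⇑(cplxCLM u)) k := by
      rw [hsOp, map_add, _root_.map_smul, FT_add, FT_smulR, FT_cplx_lap]
      push_cast
      ring
    rw [hstep, ← mul_assoc]
    congr 1
    push_cast
    ring

end Fourier

end Stmt13Aux

open Real SchwartzMap Stmt13Aux in
open scoped FourierTransform in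
/-- If `W₈ : ℝ² → ℝ` is integrable with Fourier transform
`−A(‖k‖² − C)(‖k‖² − D)/(B + (‖k‖² − M)⁴)` (with `B > 0`), then for every Schwartz
function `f` the eighth-order identity
`B (W₈ ⋆ f) + (M + Δ)⁴ (W₈ ⋆ f) = −A (Δ + C)(Δ + D) f` holds everywhere on `ℝ²`, where
`(M + Δ)⁴` is the four-fold composition of `g ↦ M g + Δg` and
`(Δ + C)(Δ + D) f = Δ(Δf) + (C + D) Δf + C D f`. -/
theorem stmt13 (A C D M B : ℝ) (hB : 0 < B)
    (W₈ : EuclideanSpace ℝ (Fin 2) → ℝ) (hW : Integrable W₈)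
    (hwHat : ∀ k : EuclideanSpace ℝ (Fin 2),
      (∫ x, (W₈ x : ℂ) * Complex.exp (-Complex.I * ((inner ℝ k x : ℝ) : ℂ))) =
        ((-A * (‖k‖ ^ 2 - C) * (‖k‖ ^ 2 - D) / (B + (‖k‖ ^ 2 - M) ^ 4) : ℝ) : ℂ)) :
    ∀ f : SchwartzMap (EuclideanSpace ℝ (Fin 2)) ℝ, ∀ x,
      B * (∫ y, W₈ (x - y) * f y) +
        (helmholtz M)^[4] (fun z => ∫ y, W₈ (z - y) * f y) x =
      -A * (lap (lap (⇑f)) x + (C + D) * lap (⇑f) x + C * D * f x) := by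
  intro f x
  have hfun : (fun z => ∫ y, W₈ (z - y) * f y) = cv W₈ f := by
    funext z
    show (∫ y, W₈ (z - y) * f y) = ∫ t, W₈ t * f (z - t)
    rw [← integral_sub_left_eq_self (fun t => W₈ t * f (z - t)) volume z]
    simp only [sub_sub_cancel]
  have h1 : (∫ y, W₈ (x - y) * f y) = cv W₈ f x := by
    show (∫ y, W₈ (x - y) * f y) = ∫ t, W₈ t * f (x - t)
    rw [← integral_sub_left_eq_self (fun t => W₈ t * f (x - t)) volume x]
    simp only [sub_sub_cancel]
  rw [h1, hfun, iter_cv hW M 4 f, lap_coe f, lap_coe (lapS f)]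
  have hg : B * cv W₈ f x + cv W₈ ((hsOp M)^[4] f) x
      = cv W₈ (B • f + (hsOp M)^[4] f) x := by
    rw [cv_add hW, cv_smul]
  set h : 𝓢(V2, ℝ) :=
    (-A) • (lapS (lapS f) + (C + D) • lapS f + (C * D) • f) with hhdef
  have hh : h x = -A * ((lapS (lapS f)) x + (C + D) * (lapS f) x + C * D * f x) := by
    rw [hhdef]
    simp only [SchwartzMap.smul_apply, SchwartzMap.add_apply, smul_eq_mul]
    try ring
  rw [hg, ← hh]
  apply conv_eq_of_fourier hW _ _ _ x
  intro k
  rw [FTW hwHat k]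
  have hf1 : 𝓕 (⇑(cplxCLM (B • f + (hsOp M)^[4] f))) k
      = ((B + (M - 4 * π ^ 2 * ‖k‖ ^ 2) ^ 4 : ℝ) : ℂ) * 𝓕 (⇑(cplxCLM f)) k := by
    rw [map_add, _root_.map_smul, FT_add, FT_smulR, FT_hs_iter M k 4 f]
    push_cast
    ring
  have hf2 : 𝓕 (⇑(cplxCLM h)) k
      = ((-A * (4 * π ^ 2 * ‖k‖ ^ 2 - C) * (4 * π ^ 2 * ‖k‖ ^ 2 - D) : ℝ) : ℂ)
        * 𝓕 (⇑(cplxCLM f)) k := by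
    rw [hhdef, _root_.map_smul, FT_smulR, map_add, map_add, _root_.map_smul,
      _root_.map_smul, FT_add, FT_add, FT_smulR, FT_smulR,
      FT_cplx_lap (lapS f), FT_cplx_lap f]
    push_cast
    ring
  rw [hf1, hf2]
  have hden : (0 : ℝ) < B + (4 * π ^ 2 * ‖k‖ ^ 2 - M) ^ 4 := by positivity
  have hcoef : (-A * (4 * π ^ 2 * ‖k‖ ^ 2 - C) * (4 * π ^ 2 * ‖k‖ ^ 2 - D)
        / (B + (4 * π ^ 2 * ‖k‖ ^ 2 - M) ^ 4)) * (B + (M - 4 * π ^ 2 * ‖k‖ ^ 2) ^ 4)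
      = -A * (4 * π ^ 2 * ‖k‖ ^ 2 - C) * (4 * π ^ 2 * ‖k‖ ^ 2 - D) := by
    have h4 : (M - 4 * π ^ 2 * ‖k‖ ^ 2) ^ 4 = (4 * π ^ 2 * ‖k‖ ^ 2 - M) ^ 4 := by ring
    rw [h4, div_mul_cancel₀]
    exact ne_of_gt hden
  rw [← mul_assoc, ← Complex.ofReal_mul, hcoef]
end

section
/- Let μ, θ > 0 and let S be the firing-rate function S(u) = 1/(1 + e^{-μu + θ}) − 1/(1 + e^{θ}). If u : ℝ² → ℝ is a Schwartz function, then the composition S ∘ u : ℝ² → ℝ is also a Schwartz function. (Key points: S is smooth with all derivatives bounded and S(0) = 0, so S∘u inherits rapid decay of all derivatives from u.) -/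
open scoped ContDiff Nat


/-- For `μ, θ > 0` and the firing-rate function
`S(u) = 1/(1 + e^{-μu + θ}) − 1/(1 + e^θ)`, the composition of `S` with any Schwartz
function `u : ℝ² → ℝ` is again a Schwartz function. -/
theorem stmt14 (μ θ : ℝ) (hμ : 0 < μ) (hθ : 0 < θ)
    (S : ℝ → ℝ)
    (hS : ∀ u, S u = 1 / (1 + Real.exp (-μ * u + θ)) - 1 / (1 + Real.exp θ))
    (u : SchwartzMap (EuclideanSpace ℝ (Fin 2)) ℝ) :
    ∃ v : SchwartzMap (EuclideanSpace ℝ (Fin 2)) ℝ, ∀ x, v x = S (u x) := by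
  have hSfun : S = fun t => 1 / (1 + Real.exp (-μ * t + θ)) - 1 / (1 + Real.exp θ) :=
    funext hS
  have hpos : ∀ t : ℝ, 0 < 1 + Real.exp (-μ * t + θ) := fun t => by positivity
  have hSsmooth : ContDiff ℝ ∞ S := by
    rw [hSfun]
    refine ContDiff.sub ?_ contDiff_const
    exact contDiff_const.div
      (contDiff_const.add (((contDiff_const.mul contDiff_id).add contDiff_const).exp))
      fun t => (hpos t).ne'
  have hS0 : S 0 = 0 := by simp [hS]
  -- bound on u
  obtain ⟨M, hM0, hM⟩ := u.decay 0 0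
  have hu_mem : ∀ x, u x ∈ Metric.closedBall (0 : ℝ) M := by
    intro x
    rw [Metric.mem_closedBall, dist_zero_right]
    simpa [norm_iteratedFDeriv_zero] using hM x
  have hK : IsCompact (Metric.closedBall (0 : ℝ) M) := isCompact_closedBall 0 M
  -- bounds on iterated derivatives of S on the ball
  have hbd : ∀ i : ℕ, ∃ C, 0 ≤ C ∧
      ∀ y ∈ Metric.closedBall (0 : ℝ) M, ‖iteratedFDeriv ℝ i S y‖ ≤ C := by
    intro i
    obtain ⟨C, hC⟩ := hK.exists_bound_of_continuousOn
      ((hSsmooth.continuous_iteratedFDeriv (by exact_mod_cast le_top)).continuousOn)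
    exact ⟨max C 0, le_max_right _ _, fun y hy => (hC y hy).trans (le_max_left _ _)⟩
  choose g hg0 hg using hbd
  refine ⟨⟨fun x => S (u x), hSsmooth.comp u.smooth', ?_⟩, fun x => rfl⟩
  intro k n
  rcases Nat.eq_zero_or_pos n with rfl | hn
  · -- n = 0 : use the mean value theorem and S 0 = 0
    obtain ⟨L, hL0, hL⟩ : ∃ L, 0 ≤ L ∧
        ∀ y ∈ Metric.closedBall (0 : ℝ) M, ‖deriv S y‖ ≤ L := by
      obtain ⟨C, hC⟩ := hK.exists_bound_of_continuousOn
        ((hSsmooth.continuous_deriv (by exact_mod_cast le_top)).continuousOn)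
      exact ⟨max C 0, le_max_right _ _, fun y hy => (hC y hy).trans (le_max_left _ _)⟩
    obtain ⟨B, hB0, hB⟩ := u.decay k 0
    refine ⟨L * B, fun x => ?_⟩
    have hdiff : ∀ y ∈ Metric.closedBall (0 : ℝ) M, DifferentiableAt ℝ S y :=
      fun y _ => (hSsmooth.differentiable (by simp)).differentiableAt
    have h1 : ‖S (u x) - S 0‖ ≤ L * ‖u x - 0‖ :=
      (convex_closedBall (0 : ℝ) M).norm_image_sub_le_of_norm_deriv_le hdiff hL
        (Metric.mem_closedBall_self hM0.le) (hu_mem x)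
    rw [hS0, sub_zero, sub_zero] at h1
    have h2 : ‖x‖ ^ k * ‖iteratedFDeriv ℝ 0 (fun x => S (u x)) x‖
        = ‖x‖ ^ k * ‖S (u x)‖ := by rw [norm_iteratedFDeriv_zero]
    rw [h2]
    have h3 : ‖x‖ ^ k * ‖S (u x)‖ ≤ ‖x‖ ^ k * (L * ‖u x‖) :=
      mul_le_mul_of_nonneg_left h1 (by positivity)
    refine h3.trans ?_
    have h4 : ‖x‖ ^ k * ‖u x‖ ≤ B := by
      simpa [norm_iteratedFDeriv_zero] using hB x
    calc ‖x‖ ^ k * (L * ‖u x‖) = L * (‖x‖ ^ k * ‖u x‖) := by ring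
      _ ≤ L * B := by gcongr
  · -- n ≥ 1
    set C : ℝ := (Finset.range (n + 1)).sup' ⟨0, by simp⟩ g with hCdef
    have hC0 : 0 ≤ C :=
      (hg0 0).trans (Finset.le_sup' g (by simp : 0 ∈ Finset.range (n + 1)))
    have hC : ∀ i, i ≤ n → ∀ y ∈ Metric.closedBall (0 : ℝ) M,
        ‖iteratedFDeriv ℝ i S y‖ ≤ C := by
      intro i hi y hy
      exact (hg i y hy).trans
        (Finset.le_sup' g (Finset.mem_range.mpr (Nat.lt_succ_of_le hi)))
    set B2 : ℝ := 2 ^ (k * n) *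
      (Finset.Iic (k * n, n)).sup (fun m => SchwartzMap.seminorm ℝ m.1 m.2) u with hB2def
    set A : ℝ := max 1 B2 with hAdef
    have hA1 : (1 : ℝ) ≤ A := le_max_left _ _
    have hA0 : (0 : ℝ) < A := lt_of_lt_of_le one_pos hA1
    refine ⟨n ! * C * A ^ n, fun x => ?_⟩
    have hx1 : (0 : ℝ) < 1 + ‖x‖ := by positivity
    have hD : ∀ i, 1 ≤ i → i ≤ n →
        ‖iteratedFDeriv ℝ i u x‖ ≤ (A / (1 + ‖x‖) ^ k) ^ i := by
      intro i h1i hin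
      have hkey : (1 + ‖x‖) ^ (k * i) * ‖iteratedFDeriv ℝ i u x‖ ≤ B2 :=
        SchwartzMap.one_add_le_sup_seminorm_apply (m := (k * n, n))
          (Nat.mul_le_mul_left k hin) hin u x
      have hBA : B2 ≤ A ^ i := by
        refine (le_max_right 1 B2).trans ?_
        exact le_self_pow₀ hA1 (by omega)
      rw [div_pow, ← pow_mul]
      rw [le_div_iff₀ (by positivity)]
      calc ‖iteratedFDeriv ℝ i u x‖ * (1 + ‖x‖) ^ (k * i)
          = (1 + ‖x‖) ^ (k * i) * ‖iteratedFDeriv ℝ i u x‖ := by ring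
        _ ≤ B2 := hkey
        _ ≤ A ^ i := hBA
    have hmain : ‖iteratedFDeriv ℝ n (S ∘ u) x‖ ≤
        n ! * C * (A / (1 + ‖x‖) ^ k) ^ n :=
      norm_iteratedFDeriv_comp_le hSsmooth u.smooth' (by exact_mod_cast le_top) x
        (fun i hi => hC i hi (u x) (hu_mem x)) hD
    have heq : iteratedFDeriv ℝ n (fun x => S (u x)) x = iteratedFDeriv ℝ n (S ∘ u) x := rfl
    rw [heq]
    have hxk : ‖x‖ ^ k ≤ (1 + ‖x‖) ^ (k * n) := by
      calc ‖x‖ ^ k ≤ (1 + ‖x‖) ^ k := by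
            gcongr
            linarith [norm_nonneg x]
        _ ≤ (1 + ‖x‖) ^ (k * n) := by
            apply pow_le_pow_right₀ (by linarith [norm_nonneg x])
            exact Nat.le_mul_of_pos_right k hn
    calc ‖x‖ ^ k * ‖iteratedFDeriv ℝ n (S ∘ u) x‖
        ≤ ‖x‖ ^ k * (n ! * C * (A / (1 + ‖x‖) ^ k) ^ n) :=
          mul_le_mul_of_nonneg_left hmain (by positivity)
      _ = n ! * C * A ^ n * (‖x‖ ^ k / (1 + ‖x‖) ^ (k * n)) := by
          rw [div_pow, ← pow_mul]
          field_simp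
      _ ≤ n ! * C * A ^ n * 1 :=
          mul_le_mul_of_nonneg_left (div_le_one_of_le₀ hxk (by positivity)) (by positivity)
      _ = n ! * C * A ^ n := by ring
end

section
/- Let μ, θ > 0 with firing-rate function S, let A, M ∈ ℝ and B > 0, and let W₄ : ℝ² → ℝ be integrable with Fourier transform ŵ₄(k) = ∫_{ℝ²} W₄(x) e^{-i⟨k,x⟩} dx equal to A/(B + (‖k‖² − M)²) for all k. If u : ℝ² → ℝ is a Schwartz function that is a stationary solution of the integral neural field model with kernel W₄ and no input, i.e. u(x) = ∫_{ℝ²} W₄(x − y) S(u(y)) dy for all x ∈ ℝ², then u satisfies the stationary fourth-order PDE B u + (M + Δ)² u = A (S ∘ u) everywhere on ℝ², where (M + Δ)² u = M² u + 2M Δu + Δ(Δu). -/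
open MeasureTheory FourierTransform SchwartzMap Complex
open scoped Real

namespace Stmt15Aux

abbrev V2 := EuclideanSpace ℝ (Fin 2)

noncomputable def ofRealS (f : 𝓢(V2, ℝ)) : 𝓢(V2, ℂ) where
  toFun x := (f x : ℂ)
  smooth' := Complex.ofRealCLM.contDiff.comp (f.smooth ⊤)
  decay' := by
    intro k n
    obtain ⟨C, hC⟩ := f.decay' k n
    refine ⟨C, fun x => ?_⟩
    have h := Complex.ofRealLI.norm_iteratedFDeriv_comp_left (i := n) ((f.smooth ⊤).contDiffAt (x := x))
      (by exact_mod_cast le_top)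
    have h2 : (⇑Complex.ofRealLI ∘ ⇑f) = fun y => ((f y : ℝ) : ℂ) := rfl
    rw [h2] at h
    rw [h]
    exact hC x

@[simp] lemma ofRealS_apply (f : 𝓢(V2, ℝ)) (x : V2) : ofRealS f x = (f x : ℂ) := rfl

noncomputable abbrev pderivCLM (𝕜 : Type) {F : Type*} [NormedAddCommGroup F] [NormedSpace ℝ F]
    (m : V2) (f : 𝓢(V2, F)) : 𝓢(V2, F) := LineDeriv.lineDerivOp m f

lemma pderivCLM_apply (𝕜 : Type) {F : Type*} [NormedAddCommGroup F] [NormedSpace ℝ F]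
    (m : V2) (f : 𝓢(V2, F)) (x : V2) : pderivCLM 𝕜 m f x = fderiv ℝ f x m := rfl

noncomputable def e2 (i : Fin 2) : V2 := EuclideanSpace.single i (1 : ℝ)

noncomputable def lapR (f : 𝓢(V2, ℝ)) : 𝓢(V2, ℝ) :=
  ∑ i : Fin 2, pderivCLM ℝ (e2 i) (pderivCLM ℝ (e2 i) f)

noncomputable def lapC (f : 𝓢(V2, ℂ)) : 𝓢(V2, ℂ) :=
  ∑ i : Fin 2, pderivCLM ℝ (e2 i) (pderivCLM ℝ (e2 i) f)

lemma lap_eq (f : 𝓢(V2, ℝ)) : lap ⇑f = ⇑(lapR f) := by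
  funext x
  have hsum : (⇑(lapR f) : V2 → ℝ) =
      ∑ i : Fin 2, ⇑(pderivCLM ℝ (e2 i) (pderivCLM ℝ (e2 i) f)) := by
    rw [lapR, ← coe_coeHom, map_sum]
  have h : ∀ i : Fin 2, (fun y => fderiv ℝ (⇑f) y (e2 i)) = ⇑(pderivCLM ℝ (e2 i) f) :=
    fun i => funext fun y => (pderivCLM_apply ℝ (e2 i) f y).symm
  rw [hsum]
  simp only [lap, Finset.sum_apply]
  refine Finset.sum_congr rfl fun i _ => ?_
  rw [show (EuclideanSpace.single i (1:ℝ)) = e2 i from rfl, h i, pderivCLM_apply]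

lemma ofRealS_pderiv (m : V2) (f : 𝓢(V2, ℝ)) :
    pderivCLM ℝ m (ofRealS f) = ofRealS (pderivCLM ℝ m f) := by
  ext x
  simp only [pderivCLM_apply, ofRealS_apply]
  have h : HasFDerivAt (fun y : V2 => ((f y : ℝ) : ℂ))
      (Complex.ofRealCLM.comp (fderiv ℝ (⇑f) x)) x :=
    Complex.ofRealCLM.hasFDerivAt.comp x f.differentiableAt.hasFDerivAt
  rw [show (⇑(ofRealS f)) = fun y : V2 => ((f y : ℝ) : ℂ) from rfl, h.fderiv]
  simp

lemma schwartz_sum_apply {ι : Type*} {E' : Type*} [NormedAddCommGroup E'] [NormedSpace ℝ E']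
    (s : Finset ι) (F : ι → 𝓢(V2, E')) (x : V2) : (∑ i ∈ s, F i) x = ∑ i ∈ s, F i x := by
  have h := congrFun (map_sum (FunLike.coeAddMonoidHom 𝓢(V2, E') V2 E') F s) x
  rw [FunLike.coe_coeAddMonoidHom] at h
  simpa [Finset.sum_apply] using h

lemma ofRealS_sum {ι : Type*} (s : Finset ι) (F : ι → 𝓢(V2, ℝ)) :
    ofRealS (∑ i ∈ s, F i) = ∑ i ∈ s, ofRealS (F i) := by
  ext x
  simp [schwartz_sum_apply]

lemma ofRealS_lapC (f : 𝓢(V2, ℝ)) : lapC (ofRealS f) = ofRealS (lapR f) := by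
  rw [lapC, lapR, ofRealS_sum]
  exact Finset.sum_congr rfl fun i _ => by rw [ofRealS_pderiv, ofRealS_pderiv]

lemma integrable_fderiv (f : 𝓢(V2, ℂ)) : Integrable (fderiv ℝ (⇑f)) volume := by
  have h : (fderiv ℝ (⇑f)) = ⇑(fderivCLM ℝ V2 ℂ f) := funext fun x => (fderivCLM_apply ℝ f x).symm
  rw [h]
  exact (fderivCLM ℝ V2 ℂ f).integrable

lemma fourier_pderiv (f : 𝓢(V2, ℂ)) (m : V2) (w : V2) :
    𝓕 ⇑(pderivCLM ℝ m f) w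
      = ((2 * (π : ℂ) * Complex.I) * ((inner ℝ w m : ℝ) : ℂ)) • 𝓕 ⇑f w := by
  have hcoe : ⇑(pderivCLM ℝ m f) = fun x => fderiv ℝ (⇑f) x m :=
    funext fun x => pderivCLM_apply ℝ m f x
  have h1 : 𝓕 (fderiv ℝ (⇑f)) = VectorFourier.fourierSMulRight (-(innerSL ℝ)) (𝓕 ⇑f) :=
    Real.fourier_fderiv f.integrable f.differentiable (integrable_fderiv f)
  have happ : (𝓕 (fderiv ℝ (⇑f)) w) m = 𝓕 (fun x => fderiv ℝ (⇑f) x m) w :=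
    Real.fourier_continuousLinearMap_apply (integrable_fderiv f)
  rw [hcoe, ← happ, h1, VectorFourier.fourierSMulRight_apply]
  simp only [ContinuousLinearMap.neg_apply, innerSL_apply_apply ℝ, smul_smul, Complex.real_smul]
  norm_num
  ring_nf

lemma fourier_lapC (f : 𝓢(V2, ℂ)) (w : V2) :
    𝓕 ⇑(lapC f) w = ((-(4 * π ^ 2 * ‖w‖ ^ 2) : ℝ) : ℂ) • 𝓕 ⇑f w := by
  have h0 : 𝓕 ⇑(lapC f) w
      = ∑ i : Fin 2, 𝓕 ⇑(pderivCLM ℝ (e2 i) (pderivCLM ℝ (e2 i) f)) w := by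
    have hc : (⇑(fourierTransformCLM ℝ (lapC f)) : V2 → ℂ)
        = ∑ i : Fin 2,
            ⇑(fourierTransformCLM ℝ (pderivCLM ℝ (e2 i) (pderivCLM ℝ (e2 i) f))) := by
      rw [lapC, map_sum, ← coe_coeHom, map_sum]
    have h' := congrFun hc w
    simpa [Finset.sum_apply, fourier_coe] using h'
  have hstep : ∀ i : Fin 2, 𝓕 ⇑(pderivCLM ℝ (e2 i) (pderivCLM ℝ (e2 i) f)) w
      = (((2 * (π : ℂ) * Complex.I) * ((w i : ℝ) : ℂ)) ^ 2) • 𝓕 ⇑f w := by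
    intro i
    have hw : (inner ℝ w (e2 i) : ℝ) = w i := by
      simp [e2, EuclideanSpace.inner_single_right]
    rw [fourier_pderiv, fourier_pderiv, hw, smul_smul]
    ring_nf
  rw [h0, Finset.sum_congr rfl fun i _ => hstep i, ← Finset.sum_smul]
  congr 1
  have hnorm : ‖w‖ ^ 2 = ∑ i : Fin 2, (w i) ^ 2 := by
    rw [← real_inner_self_eq_norm_sq]
    rw [real_inner_self_eq_norm_sq, EuclideanSpace.real_norm_sq_eq]
  have key : ∀ c : ℂ, (2 * (π : ℂ) * Complex.I * c) ^ 2 = -(4 * (π:ℂ) ^ 2) * c ^ 2 := by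
    intro c
    rw [show (2 * (π:ℂ) * Complex.I * c) ^ 2 = (4 * (π:ℂ) ^ 2 * c ^ 2) * Complex.I ^ 2 by ring,
      Complex.I_sq]
    ring
  rw [Finset.sum_congr rfl fun i _ => key ((w i : ℝ) : ℂ), hnorm]
  push_cast
  rw [← Finset.mul_sum]
  ring

noncomputable def char2 (w v : V2) : ℂ :=
  Complex.exp (((-2 * π * (inner ℝ v w : ℝ) : ℝ) : ℂ) * Complex.I)

lemma char2_norm (w v : V2) : ‖char2 w v‖ = 1 :=
  Complex.norm_exp_ofReal_mul_I _

lemma char2_cont (w : V2) : Continuous (char2 w) := by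
  apply Complex.continuous_exp.comp
  apply Continuous.mul _ continuous_const
  apply Complex.continuous_ofReal.comp
  exact continuous_const.mul (Continuous.inner continuous_id continuous_const)

lemma char2_mul (w x y : V2) : char2 w x = char2 w (x - y) * char2 w y := by
  rw [char2, char2, char2, ← Complex.exp_add]
  congr 1
  push_cast [inner_sub_left]
  ring

lemma fourier_eq_char2 (f : V2 → ℂ) (w : V2) : 𝓕 f w = ∫ v, char2 w v * f v := by
  rw [Real.fourier_eq']
  congr 1 with v

lemma fourier_conv (Wc gc : V2 → ℂ) (hW : Integrable Wc) (hg : Integrable gc) (w : V2) :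
    𝓕 (fun x => ∫ y, Wc (x - y) * gc y) w = 𝓕 Wc w * 𝓕 gc w := by
  have h1 : Integrable (fun p : V2 × V2 => gc p.2 * Wc (p.1 - p.2)) (volume.prod volume) :=
    hg.convolution_integrand (ContinuousLinearMap.mul ℝ ℂ) hW
  have hprod : Integrable (fun p : V2 × V2 => char2 w p.1 * (Wc (p.1 - p.2) * gc p.2))
      (volume.prod volume) := by
    have hmeas : AEStronglyMeasurable
        (fun p : V2 × V2 => char2 w p.1 * (Wc (p.1 - p.2) * gc p.2)) (volume.prod volume) := by
      apply AEStronglyMeasurable.mul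
      · exact ((char2_cont w).comp continuous_fst).aestronglyMeasurable
      · exact h1.aestronglyMeasurable.congr (ae_of_all _ fun p => mul_comm _ _)
    refine h1.norm.mono' hmeas (ae_of_all _ fun p => ?_)
    have := char2_norm w p.1
    simp only [norm_mul, Real.norm_eq_abs] at *
    rw [this, one_mul]
    rw [mul_comm]
  calc 𝓕 (fun x => ∫ y, Wc (x - y) * gc y) w
      = ∫ x, ∫ y, char2 w x * (Wc (x - y) * gc y) := by
        rw [fourier_eq_char2]
        congr 1 with x
        rw [← integral_const_mul]
    _ = ∫ y, ∫ x, char2 w x * (Wc (x - y) * gc y) := integral_integral_swap hprod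
    _ = ∫ y, ∫ x, (char2 w (x - y) * Wc (x - y)) * (char2 w y * gc y) := by
        congr 1 with y
        congr 1 with x
        rw [char2_mul w x y]; ring
    _ = ∫ y, (∫ x, char2 w (x - y) * Wc (x - y)) * (char2 w y * gc y) := by
        congr 1 with y
        rw [integral_mul_const]
    _ = ∫ y, (𝓕 Wc w) * (char2 w y * gc y) := by
        congr 1 with y
        rw [show (fun x => char2 w (x - y) * Wc (x - y))
              = fun x => ((fun z => char2 w z * Wc z) (x - y)) from rfl,
          integral_sub_right_eq_self (fun z => char2 w z * Wc z) y,
          fourier_eq_char2]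
    _ = 𝓕 Wc w * 𝓕 gc w := by
        rw [integral_const_mul, fourier_eq_char2, fourier_eq_char2]

lemma exp_sub_one_le (t : ℝ) (ht : 0 ≤ t) : Real.exp t - 1 ≤ t * Real.exp t := by
  have hexp := Real.add_one_le_exp (-t)
  have hmul : Real.exp (-t) * Real.exp t = 1 := by rw [← Real.exp_add]; simp
  nlinarith [mul_le_mul_of_nonneg_right hexp (Real.exp_pos t).le]

lemma S_lip (μ θ v : ℝ) (hμ : 0 < μ) :
    |1 / (1 + Real.exp (-μ * v + θ)) - 1 / (1 + Real.exp θ)| ≤ μ * |v| := by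
  set a := Real.exp (-μ * v + θ) with ha
  set b := Real.exp θ with hb
  have hap : 0 < a := Real.exp_pos _
  have hbp : 0 < b := Real.exp_pos _
  have hd : 1 / (1 + a) - 1 / (1 + b) = (b - a) / ((1 + a) * (1 + b)) := by
    field_simp
    ring
  rw [hd, abs_div, _root_.abs_of_pos (by positivity : (0:ℝ) < (1 + a) * (1 + b)),
    div_le_iff₀ (by positivity)]
  rcases le_total 0 v with hv | hv
  · have hba : a = b * Real.exp (-(μ * v)) := by
      rw [ha, hb, ← Real.exp_add]
      congr 1
      ring
    have hE : Real.exp (-(μ * v)) ≤ 1 := Real.exp_le_one_iff.2 (by nlinarith)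
    have h1m : 1 - μ * v ≤ Real.exp (-(μ * v)) := by
      nlinarith [Real.add_one_le_exp (-(μ * v))]
    have hab : a ≤ b := by rw [hba]; nlinarith
    rw [_root_.abs_of_nonneg (by linarith : (0:ℝ) ≤ b - a), _root_.abs_of_nonneg hv]
    have key1 : b - a ≤ b * (μ * v) := by rw [hba]; nlinarith
    have key2 : b * (μ * v) ≤ μ * v * ((1 + a) * (1 + b)) := by
      nlinarith [mul_nonneg hμ.le hv]
    linarith
  · have ht : 0 ≤ μ * (-v) := by nlinarith
    have hba : a = b * Real.exp (μ * (-v)) := by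
      rw [ha, hb, ← Real.exp_add]
      congr 1
      ring
    have hE : 1 ≤ Real.exp (μ * (-v)) := Real.one_le_exp_iff.2 ht
    have hab : b ≤ a := by rw [hba]; nlinarith
    rw [_root_.abs_of_nonpos (by linarith : b - a ≤ 0), _root_.abs_of_nonpos hv]
    have key0 := exp_sub_one_le (μ * (-v)) ht
    have key1 : a - b ≤ a * (μ * (-v)) := by rw [hba]; nlinarith
    have key2 : a * (μ * (-v)) ≤ μ * (-v) * ((1 + a) * (1 + b)) := by nlinarith
    linarith

end Stmt15Aux


open Stmt15Aux in
/-- Let `S` be the firing-rate function (`μ, θ > 0`) and `W₄` an integrable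
kernel with Fourier transform `A/(B + (‖k‖² − M)²)` (`B > 0`). If a Schwartz function `u`
is a stationary solution of the integral neural field model with kernel `W₄` and no
input, i.e. `u(x) = ∫ W₄(x−y) S(u(y)) dy`, then `u` satisfies the stationary
fourth-order PDE `B u + (M + Δ)² u = A (S ∘ u)` everywhere on `ℝ²`, where
`(M + Δ)² u = M² u + 2M Δu + Δ(Δu)`. -/
theorem stmt15 (μ θ : ℝ) (hμ : 0 < μ) (hθ : 0 < θ)
    (S : ℝ → ℝ)
    (hS : ∀ v, S v = 1 / (1 + Real.exp (-μ * v + θ)) - 1 / (1 + Real.exp θ))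
    (A M B : ℝ) (hB : 0 < B)
    (W₄ : EuclideanSpace ℝ (Fin 2) → ℝ) (hW : Integrable W₄)
    (hwHat : ∀ k : EuclideanSpace ℝ (Fin 2),
      (∫ x, (W₄ x : ℂ) * Complex.exp (-Complex.I * ((inner ℝ k x : ℝ) : ℂ))) =
        ((A / (B + (‖k‖ ^ 2 - M) ^ 2) : ℝ) : ℂ))
    (u : SchwartzMap (EuclideanSpace ℝ (Fin 2)) ℝ)
    (heq : ∀ x, u x = ∫ y, W₄ (x - y) * S (u y)) :
    ∀ x, B * u x + (M ^ 2 * u x + 2 * M * lap (⇑u) x + lap (lap (⇑u)) x) =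
      A * S (u x) := by
  classical
  have hScont : Continuous S := by
    have hSfun : S = fun v => 1 / (1 + Real.exp (-μ * v + θ)) - 1 / (1 + Real.exp θ) :=
      funext hS
    rw [hSfun]
    have hc : Continuous fun v : ℝ => 1 + Real.exp (-μ * v + θ) := by continuity
    exact (continuous_const.div hc fun v => by positivity).sub continuous_const
  have hSb : ∀ v, |S v| ≤ μ * |v| := fun v => by rw [hS v]; exact S_lip μ θ v hμ
  set g : V2 → ℝ := fun y => S (u y) with hgdef
  have hgcont : Continuous g := hScont.comp u.continuous
  have hgint : Integrable g volume := by
    refine ((u.integrable (μ := volume)).norm.const_mul μ).mono' hgcont.aestronglyMeasurable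
      (ae_of_all _ fun y => ?_)
    simpa [Real.norm_eq_abs, abs_mul, _root_.abs_of_pos hμ] using hSb (u y)
  set uC : 𝓢(V2, ℂ) := ofRealS u with huC
  set WC : V2 → ℂ := fun y => ((W₄ y : ℝ) : ℂ) with hWCdef
  set gC : V2 → ℂ := fun y => ((g y : ℝ) : ℂ) with hgCdef
  have hWCint : Integrable WC volume := hW.ofReal
  have hgCint : Integrable gC volume := hgint.ofReal
  have hconv : ⇑uC = fun z => ∫ y, WC (z - y) * gC y := by
    funext z
    rw [huC, ofRealS_apply, heq z]
    have hy : ∀ y : V2, WC (z - y) * gC y = ((W₄ (z - y) * g y : ℝ) : ℂ) := fun y => by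
      push_cast
      ring
    simp_rw [hy]
    have hLI := Complex.ofRealLI.integral_comp_comm (μ := volume) (fun y : V2 => W₄ (z - y) * g y)
    have hco : ∀ r : ℝ, Complex.ofRealLI r = (r : ℂ) := fun r => rfl
    simp only [hco] at hLI
    rw [hLI]
  have hFu : ∀ w, 𝓕 ⇑uC w = 𝓕 WC w * 𝓕 gC w := fun w => by
    rw [hconv]; exact fourier_conv WC gC hWCint hgCint w
  set P : V2 → ℝ := fun w => B + (4 * π ^ 2 * ‖w‖ ^ 2 - M) ^ 2 with hPdef
  have hPpos : ∀ w, 0 < P w := fun w => by rw [hPdef]; positivity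
  have hFW : ∀ w, 𝓕 WC w = ((A / P w : ℝ) : ℂ) := by
    intro w
    have h := hwHat ((2 * π) • w)
    have hnorm : ‖(2 * π) • w‖ ^ 2 = 4 * π ^ 2 * ‖w‖ ^ 2 := by
      rw [norm_smul]
      rw [Real.norm_eq_abs, _root_.abs_of_pos Real.two_pi_pos]
      ring
    rw [hnorm] at h
    rw [fourier_eq_char2, ← h]
    congr 1 with v
    rw [char2, mul_comm]
    congr 1
    have hi : (inner ℝ ((2 * π) • w) v : ℝ) = 2 * π * (inner ℝ v w : ℝ) := by
      rw [real_inner_smul_left, real_inner_comm]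
    rw [hi]
    push_cast
    ring
  set Lu : 𝓢(V2, ℂ) := B • uC + (M ^ 2) • uC + (2 * M) • lapC uC + lapC (lapC uC) with hLudef
  have hFLu : ∀ w, 𝓕 ⇑Lu w = ((P w : ℝ) : ℂ) * 𝓕 ⇑uC w := by
    intro w
    have hFT : ∀ (h : 𝓢(V2, ℂ)), 𝓕 ⇑h w = fourierTransformCLM ℝ h w :=
      fun h => rfl
    have hadd : 𝓕 ⇑Lu w = (B : ℂ) * 𝓕 ⇑uC w + ((M : ℂ) ^ 2) * 𝓕 ⇑uC w
        + ((2 * M : ℝ) : ℂ) * 𝓕 ⇑(lapC uC) w + 𝓕 ⇑(lapC (lapC uC)) w := by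
      rw [hFT, hLudef]
      simp only [map_add, _root_.map_smul, add_apply, smul_apply, Complex.real_smul]
      rw [← hFT, ← hFT, ← hFT]
      push_cast
      ring
    rw [hadd, fourier_lapC, fourier_lapC, fourier_lapC]
    simp only [Complex.real_smul, smul_eq_mul, hPdef]
    push_cast
    ring
  have hFLu2 : ∀ w, 𝓕 ⇑Lu w = 𝓕 (fun y => (A : ℂ) * gC y) w := by
    intro w
    have hA : 𝓕 (fun y => (A : ℂ) * gC y) w = (A : ℂ) * 𝓕 gC w := by
      rw [fourier_eq_char2, fourier_eq_char2, ← integral_const_mul]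
      congr 1 with y
      ring
    have hPA : P w * (A / P w) = A := by
      field_simp [(hPpos w).ne']
    rw [hFLu, hFu w, hA, hFW w]
    rw [show ((P w : ℝ) : ℂ) * (((A / P w : ℝ) : ℂ) * 𝓕 gC w)
        = ((P w * (A / P w) : ℝ) : ℂ) * 𝓕 gC w by push_cast; ring, hPA]
  have hRcont : Continuous (fun y => (A : ℂ) * gC y) :=
    continuous_const.mul (Complex.continuous_ofReal.comp hgcont)
  have hRint : Integrable (fun y => (A : ℂ) * gC y) volume := hgCint.const_mul _
  have hFLuint : Integrable (𝓕 ⇑Lu) volume := by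
    have h : 𝓕 ⇑Lu = ⇑(fourierTransformCLM ℝ Lu) := rfl
    rw [h]
    exact (fourierTransformCLM ℝ Lu).integrable
  have hFeq : 𝓕 (fun y => (A : ℂ) * gC y) = 𝓕 ⇑Lu := funext fun w => (hFLu2 w).symm
  have hinv1 := Lu.continuous.fourierInv_fourier_eq Lu.integrable hFLuint
  have hinv2 := hRcont.fourierInv_fourier_eq hRint (by rw [hFeq]; exact hFLuint)
  have hLueq : ⇑Lu = fun y => (A : ℂ) * gC y := by
    calc ⇑Lu = 𝓕⁻ (𝓕 ⇑Lu) := hinv1.symm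
      _ = 𝓕⁻ (𝓕 fun y => (A : ℂ) * gC y) := by rw [hFeq]
      _ = fun y => (A : ℂ) * gC y := hinv2
  intro x
  have hx := congrFun hLueq x
  have hlap1 : lapC uC = ofRealS (lapR u) := by rw [huC, ofRealS_lapC]
  have hlap2 : lapC (lapC uC) = ofRealS (lapR (lapR u)) := by rw [hlap1, ofRealS_lapC]
  have hLux : Lu x
      = ((B * u x + M ^ 2 * u x + 2 * M * (lapR u) x + (lapR (lapR u)) x : ℝ) : ℂ) := by
    rw [hLudef, huC, ofRealS_lapC, ofRealS_lapC]
    simp only [add_apply, smul_apply, ofRealS_apply, Complex.real_smul]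
    push_cast
    ring
  rw [hLux] at hx
  have hgx : (A : ℂ) * gC x = ((A * g x : ℝ) : ℂ) := by push_cast; ring
  rw [hgx] at hx
  have hxr : B * u x + M ^ 2 * u x + 2 * M * (lapR u) x + (lapR (lapR u)) x = A * g x :=
    mod_cast hx
  have hlapu : lap ⇑u = ⇑(lapR u) := lap_eq u
  have e1 : lap (⇑u) x = (lapR u) x := congrFun hlapu x
  have e2 : lap (lap (⇑u)) x = (lapR (lapR u)) x := by
    rw [hlapu, lap_eq]
  rw [e1, e2]
  have hgx2 : g x = S (u x) := rfl
  rw [← hgx2]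
  linarith [hxr]
end
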